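/- arXiv:2011.01932 — 5 statements merged into one kernel-verified Lean document; each statement's English description precedes it below -/
import Mathlib

section
/- Energy identity (equation (EE)): Let (h, ξ) be a solution of the system (gf) on an interval [0,T) with h > 0 there. Define F(t) := (ḣ(t) − ξ̇(t))² + a·ḣ(t)² + 2a·B(ξ(t)). Then for every t ∈ [0,T), F(t) + 2aμ·∫₀ᵗ 𝒟(h(s), ξ(s))·ḣ(s)² ds = F(0). -/
open Real Filter Set MeasureTheory Metric

noncomputable section

/-- The potential `B(y) = ∫₀^y b(w) dw` of the elastic response `b`. -/
def potB (b : ℝ → ℝ) (y : ℝ) : ℝ := ∫ w in (0:ℝ)..y, b w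

/-- (B1): `b` is locally Lipschitz continuous. -/
def HypB1 (b : ℝ → ℝ) : Prop := LocallyLipschitz b

/-- (B2): the potential `B` is coercive, i.e. `B(y) → ∞` as `|y| → ∞`. -/
def HypB2 (b : ℝ → ℝ) : Prop := Tendsto (potB b) (cocompact ℝ) atTop

/-- (B3): the potential `B` is nonnegative. -/
def HypB3 (b : ℝ → ℝ) : Prop := ∀ y : ℝ, 0 ≤ potB b y

/-- (B4): `b(y)·y > 0` for all `y ≠ 0`. -/
def HypB4 (b : ℝ → ℝ) : Prop := ∀ y : ℝ, y ≠ 0 → 0 < b y * y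

/-- The drag factor `𝒟` maps `(0,∞) × ℝ` into `(0,∞)`. -/
def HypDpos (D : ℝ → ℝ → ℝ) : Prop := ∀ x ξ : ℝ, 0 < x → 0 < D x ξ

/-- (D1): `𝒟` is locally Lipschitz continuous on `(0,∞) × ℝ`. -/
def HypD1 (D : ℝ → ℝ → ℝ) : Prop :=
  ∀ p : ℝ × ℝ, 0 < p.1 → ∃ ε > 0, ∃ L : NNReal,
    LipschitzOnWith L (fun q : ℝ × ℝ => D q.1 q.2)
      (Metric.ball p ε ∩ {q : ℝ × ℝ | 0 < q.1})

/-- (D2): singular lower bound `𝒟(h,ξ) ≥ c·h^(−α)`, uniformly in `ξ`. -/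
def HypD2 (D : ℝ → ℝ → ℝ) (c α : ℝ) : Prop :=
  0 < c ∧ 1 ≤ α ∧ ∀ x ξ : ℝ, 0 < x → c * x ^ (-α) ≤ D x ξ

/-- (D3): `𝒟(h,ξ) = g(h)·h^(−α)` with `g : (0,∞) → [C₁,C₂]` locally Lipschitz. -/
def HypD3 (D : ℝ → ℝ → ℝ) (g : ℝ → ℝ) (C₁ C₂ α : ℝ) : Prop :=
  0 < C₁ ∧ C₁ ≤ C₂ ∧ 1 ≤ α ∧
  (∀ x : ℝ, 0 < x → ∃ ε > 0, ∃ L : NNReal,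
      LipschitzOnWith L g (Metric.ball x ε ∩ Set.Ioi 0)) ∧
  (∀ x : ℝ, 0 < x → g x ∈ Set.Icc C₁ C₂) ∧
  (∀ x ξ : ℝ, 0 < x → D x ξ = g x * x ^ (-α))

/-- (D4): `ξ ↦ 𝒟(h,ξ)` is nondecreasing for every `h > 0`. -/
def HypD4 (D : ℝ → ℝ → ℝ) : Prop :=
  ∀ x : ℝ, 0 < x → ∀ ξ₁ ξ₂ : ℝ, ξ₁ ≤ ξ₂ → D x ξ₁ ≤ D x ξ₂

/-- (D5): `𝒟(h,−δ₁) ≥ c₁·h^(−γ₁)` with `γ₁ ≥ α`. -/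
def HypD5 (D : ℝ → ℝ → ℝ) (α δ₁ c₁ γ₁ : ℝ) : Prop :=
  0 < δ₁ ∧ 0 < c₁ ∧ α ≤ γ₁ ∧ ∀ x : ℝ, 0 < x → c₁ * x ^ (-γ₁) ≤ D x (-δ₁)

/-- (D6): `𝒟(h,−δ₂) ≤ γ(h)·h^(−γ₁)` with `∫₀^h γ(y)/y dy → 0` as `h → 0⁺`. -/
def HypD6 (D : ℝ → ℝ → ℝ) (γ₁ δ₂ : ℝ) (γfun : ℝ → ℝ) : Prop :=
  0 < δ₂ ∧ (∀ y : ℝ, 0 < y → 0 ≤ γfun y) ∧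
  Tendsto (fun x : ℝ => ∫ y in (0:ℝ)..x, γfun y / y)
    (nhdsWithin 0 (Set.Ioi 0)) (nhds 0) ∧
  ∀ x : ℝ, 0 < x → D x (-δ₂) ≤ γfun x * x ^ (-γ₁)

/-- A global solution of the reduced system (gf) on `[0,∞)`:
`h, ξ` twice differentiable, `h > 0`, satisfying
`ḧ − ξ̈ = a·b(ξ)` and `ḧ = −b(ξ) − μ·𝒟(h,ξ)·ḣ`, with the given initial data. -/
def IsGlobalSolution (a μ : ℝ) (b : ℝ → ℝ) (D : ℝ → ℝ → ℝ)
    (h0 hd0 ξ0 ξd0 : ℝ) (h ξ : ℝ → ℝ) : Prop :=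
  (∀ t : ℝ, 0 ≤ t → 0 < h t) ∧
  (∀ t : ℝ, 0 ≤ t → DifferentiableAt ℝ h t ∧ DifferentiableAt ℝ (deriv h) t ∧
    DifferentiableAt ℝ ξ t ∧ DifferentiableAt ℝ (deriv ξ) t) ∧
  (∀ t : ℝ, 0 ≤ t → deriv (deriv h) t - deriv (deriv ξ) t = a * b (ξ t)) ∧
  (∀ t : ℝ, 0 ≤ t →
    deriv (deriv h) t = - b (ξ t) - μ * D (h t) (ξ t) * deriv h t) ∧
  h 0 = h0 ∧ deriv h 0 = hd0 ∧ ξ 0 = ξ0 ∧ deriv ξ 0 = ξd0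

/-- A solution of the nonlinear oscillator `ξ̈ + a·b(ξ) = 0` on `(t₀,∞)`
with `ξ(t₀) = 0` and `ξ̇(t₀) = v₀` (right derivative at `t₀`). -/
def IsOscSolution (a t₀ v₀ : ℝ) (b : ℝ → ℝ) (ψ : ℝ → ℝ) : Prop :=
  ψ t₀ = 0 ∧
  HasDerivWithinAt ψ v₀ (Set.Ici t₀) t₀ ∧
  ContinuousOn ψ (Set.Ici t₀) ∧
  Tendsto (deriv ψ) (nhdsWithin t₀ (Set.Ioi t₀)) (nhds v₀) ∧
  ∀ t : ℝ, t₀ < t → DifferentiableAt ℝ ψ t ∧ DifferentiableAt ℝ (deriv ψ) t ∧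
    deriv (deriv ψ) t + a * b (ψ t) = 0

/-- A solution of the reduced system (gf) on the interval `[0,T)`. -/
def IsSolutionOn (a μ T : ℝ) (b : ℝ → ℝ) (D : ℝ → ℝ → ℝ) (h ξ : ℝ → ℝ) : Prop :=
  (∀ t ∈ Set.Ico (0:ℝ) T, 0 < h t) ∧
  (∀ t ∈ Set.Ico (0:ℝ) T, DifferentiableAt ℝ h t ∧ DifferentiableAt ℝ (deriv h) t ∧
    DifferentiableAt ℝ ξ t ∧ DifferentiableAt ℝ (deriv ξ) t) ∧
  (∀ t ∈ Set.Ico (0:ℝ) T, deriv (deriv h) t - deriv (deriv ξ) t = a * b (ξ t)) ∧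
  (∀ t ∈ Set.Ico (0:ℝ) T,
    deriv (deriv h) t = - b (ξ t) - μ * D (h t) (ξ t) * deriv h t)

/-- The energy identity (EE): with
`F(t) = (ḣ(t) − ξ̇(t))² + a·ḣ(t)² + 2a·B(ξ(t))`, one has
`F(t) + 2aμ·∫₀ᵗ 𝒟(h(s),ξ(s))·ḣ(s)² ds = F(0)` on `[0,T)`. -/
theorem energy_identity
    (a μ T : ℝ) (b : ℝ → ℝ) (D : ℝ → ℝ → ℝ) (h ξ : ℝ → ℝ)
    (ha : 0 < a) (hμ : 0 < μ) (hT : 0 < T)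
    (hb : Continuous b)
    (hD : ContinuousOn (fun q : ℝ × ℝ => D q.1 q.2) {q : ℝ × ℝ | 0 < q.1})
    (hDpos : HypDpos D)
    (hsol : IsSolutionOn a μ T b D h ξ) :
    ∀ t ∈ Set.Ico (0:ℝ) T,
      ((deriv h t - deriv ξ t) ^ 2 + a * (deriv h t) ^ 2 + 2 * a * potB b (ξ t))
          + 2 * a * μ * ∫ s in (0:ℝ)..t, D (h s) (ξ s) * (deriv h s) ^ 2
        = (deriv h 0 - deriv ξ 0) ^ 2 + a * (deriv h 0) ^ 2
            + 2 * a * potB b (ξ 0) := by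
  rintro t ⟨ht0, htT⟩
  obtain ⟨hpos, hdiff, ode1, ode2⟩ := hsol
  have hsub : Set.uIcc (0:ℝ) t ⊆ Set.Ico 0 T := by
    rw [Set.uIcc_of_le ht0]
    exact fun s hs => ⟨hs.1, lt_of_le_of_lt hs.2 htT⟩
  set E : ℝ → ℝ := fun s =>
    (deriv h s - deriv ξ s) ^ 2 + a * (deriv h s) ^ 2 + 2 * a * potB b (ξ s) with hE
  have key : ∀ s ∈ Set.uIcc (0:ℝ) t,
      HasDerivAt E (-(2 * a * μ) * (D (h s) (ξ s) * (deriv h s) ^ 2)) s := by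
    intro s hs
    have hsm := hsub hs
    obtain ⟨dh, ddh, dξ, ddξ⟩ := hdiff s hsm
    have H1 : HasDerivAt (deriv h) (deriv (deriv h) s) s := ddh.hasDerivAt
    have H2 : HasDerivAt (deriv ξ) (deriv (deriv ξ) s) s := ddξ.hasDerivAt
    have Hξ : HasDerivAt ξ (deriv ξ s) s := dξ.hasDerivAt
    have HB : HasDerivAt (potB b) (b (ξ s)) (ξ s) := by
      have := intervalIntegral.integral_hasDerivAt_right
        (hb.intervalIntegrable 0 (ξ s))
        (hb.stronglyMeasurableAtFilter _ _) hb.continuousAt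
      exact this
    have HBc : HasDerivAt (fun u => potB b (ξ u)) (b (ξ s) * deriv ξ s) s := HB.comp s Hξ
    have Hfull : HasDerivAt E
        (2 * (deriv h s - deriv ξ s) * (deriv (deriv h) s - deriv (deriv ξ) s)
          + a * (2 * deriv h s * deriv (deriv h) s)
          + 2 * a * (b (ξ s) * deriv ξ s)) s := by
      have A := (H1.sub H2).fun_pow 2
      have Bp := H1.fun_pow 2
      simp only [Nat.cast_ofNat, Nat.reduceSub, pow_one] at A Bp
      have H := (A.add ((Bp.const_mul a).add (HBc.const_mul (2 * a))))
      simp only [← add_assoc, pow_one] at H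
      refine H.congr_deriv ?_
      simp only [Pi.sub_apply]
    have e1 := ode1 s hsm
    have e2 := ode2 s hsm
    convert Hfull using 1
    rw [e1, e2]; ring
  have hcont : ContinuousOn (fun s => -(2 * a * μ) * (D (h s) (ξ s) * (deriv h s) ^ 2))
      (Set.uIcc (0:ℝ) t) := by
    intro s hs
    have hsm := hsub hs
    obtain ⟨dh, ddh, dξ, ddξ⟩ := hdiff s hsm
    have hD' : ContinuousAt (fun u : ℝ => D (h u) (ξ u)) s := by
      have hopen : IsOpen {q : ℝ × ℝ | 0 < q.1} := isOpen_lt continuous_const continuous_fst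
      have hmem : (h s, ξ s) ∈ {q : ℝ × ℝ | 0 < q.1} := hpos s hsm
      have hDat : ContinuousAt (fun q : ℝ × ℝ => D q.1 q.2) (h s, ξ s) :=
        hD.continuousAt (hopen.mem_nhds hmem)
      have hpair : ContinuousAt (fun u : ℝ => (h u, ξ u)) s :=
        dh.continuousAt.prodMk dξ.continuousAt
      exact Filter.Tendsto.comp hDat hpair
    exact ((continuousAt_const.mul (hD'.mul (ddh.continuousAt.pow 2)))).continuousWithinAt
  have hInt : IntervalIntegrable (fun s => -(2 * a * μ) * (D (h s) (ξ s) * (deriv h s) ^ 2))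
      MeasureTheory.volume 0 t := hcont.intervalIntegrable
  have hmain := intervalIntegral.integral_eq_sub_of_hasDerivAt key hInt
  rw [intervalIntegral.integral_const_mul] at hmain
  have hEt : E t = (deriv h t - deriv ξ t) ^ 2 + a * (deriv h t) ^ 2 + 2 * a * potB b (ξ t) := rfl
  have hE0 : E 0 = (deriv h 0 - deriv ξ 0) ^ 2 + a * (deriv h 0) ^ 2 + 2 * a * potB b (ξ 0) := rfl
  rw [hEt, hE0] at hmain
  linarith
end
end

section
/- Uniform bounds and compactness (Lemma 3.5): Assume (B1), (B2), (D1), (D2), fix initial data h₀ > 0, ḣ₀, ξ₀, ξ̇₀ ∈ ℝ, let μ_n → 0⁺ and let (h_n, ξ_n) be the corresponding global solutions of (gf). Then sup_n ( ‖ξ_n‖_{L^∞([0,∞))} + ‖ḣ_n‖_{L^∞([0,∞))} + ‖ξ̇_n‖_{L^∞([0,∞))} ) < ∞, and there exist Lipschitz continuous functions h, ξ : [0,∞) → ℝ with h nonnegative and a subsequence along which h_n → h and ξ_n → ξ uniformly on every compact subset of [0,∞). -/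
open Real Filter Set MeasureTheory Metric Topology

noncomputable section

lemma potB_hasDerivAt {b : ℝ → ℝ} (hb : Continuous b) (y : ℝ) :
    HasDerivAt (potB b) (b y) y :=
  (hb.integral_hasStrictDerivAt 0 y).hasDerivAt

lemma potB_continuous {b : ℝ → ℝ} (hb : Continuous b) : Continuous (potB b) :=
  Differentiable.continuous (fun y => (potB_hasDerivAt hb y).differentiableAt)

lemma tendstoUniformlyOn_of_lipschitz {F : ℕ → ℝ → ℝ} {f : ℝ → ℝ} {L : NNReal}
    (hF : ∀ n, LipschitzWith L (F n))
    (hpt : ∀ x, Tendsto (fun n => F n x) atTop (𝓝 (f x)))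
    {K : Set ℝ} (hK : IsCompact K) : TendstoUniformlyOn F f atTop K := by
  have hEq : Equicontinuous F :=
    equicontinuous_of_continuity_modulus (fun d => (L : ℝ) * d)
      ((continuous_mul_left (L:ℝ)).tendsto' 0 0 (by simp))
      F (fun x y i => (hF i).dist_le_mul x y)
  have key := EquicontinuousOn.tendsto_uniformOnFun_iff_pi'
      (X := ℝ) (α := ℝ) (ι := ℕ) (𝔖 := {K}) (by simpa using hK)
      (fun K' _ => hEq.equicontinuousOn _) atTop f
  have hR : Tendsto ((⋃₀ {K}).restrict ∘ (fun n => F n)) atTop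
      (𝓝 <| (⋃₀ {K}).restrict f) := by
    rw [tendsto_pi_nhds]
    exact fun x => hpt x
  have := key.mpr hR
  rw [UniformOnFun.tendsto_iff_tendstoUniformlyOn] at this
  exact this K rfl

lemma cauchy_of_rat {F : ℕ → ℝ → ℝ} {L : NNReal} (hF : ∀ n, LipschitzWith L (F n))
    (hq : ∀ q : ℚ, ∃ l, Tendsto (fun n => F n q) atTop (𝓝 l)) (t : ℝ) :
    CauchySeq (fun n => F n t) := by
  rw [Metric.cauchySeq_iff]
  intro ε hε
  have hL1 : (0:ℝ) < (L:ℝ) + 1 := by positivity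
  obtain ⟨q, hqt⟩ := exists_rat_near t (show (0:ℝ) < ε/(4*((L:ℝ)+1)) by positivity)
  obtain ⟨l, hl⟩ := hq q
  have hc := hl.cauchySeq
  rw [Metric.cauchySeq_iff] at hc
  obtain ⟨N, hN⟩ := hc (ε/2) (by positivity)
  refine ⟨N, fun m hm n hn => ?_⟩
  have h1 : dist (F m t) (F m (q:ℝ)) ≤ (L:ℝ) * dist t (q:ℝ) := (hF m).dist_le_mul _ _
  have h2 : dist (F n (q:ℝ)) (F n t) ≤ (L:ℝ) * dist (q:ℝ) t := (hF n).dist_le_mul _ _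
  have h3 := hN m hm n hn
  have hd : dist t (q:ℝ) < ε/(4*((L:ℝ)+1)) := by rwa [Real.dist_eq]
  have hd' : dist (q:ℝ) t < ε/(4*((L:ℝ)+1)) := by rwa [dist_comm]
  have hLle : (L:ℝ) * dist t (q:ℝ) ≤ ((L:ℝ)+1) * dist t (q:ℝ) :=
    mul_le_mul_of_nonneg_right (by linarith) dist_nonneg
  have hLle' : (L:ℝ) * dist (q:ℝ) t ≤ ((L:ℝ)+1) * dist (q:ℝ) t :=
    mul_le_mul_of_nonneg_right (by linarith) dist_nonneg
  have hq4 : ((L:ℝ)+1) * dist t (q:ℝ) < ε/4 := by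
    have := mul_lt_mul_of_pos_left hd hL1
    calc ((L:ℝ)+1) * dist t (q:ℝ) < ((L:ℝ)+1) * (ε/(4*((L:ℝ)+1))) := this
    _ = ε/4 := by field_simp
  have hq4' : ((L:ℝ)+1) * dist (q:ℝ) t < ε/4 := by
    have := mul_lt_mul_of_pos_left hd' hL1
    calc ((L:ℝ)+1) * dist (q:ℝ) t < ((L:ℝ)+1) * (ε/(4*((L:ℝ)+1))) := this
    _ = ε/4 := by field_simp
  calc dist (F m t) (F n t)
      ≤ dist (F m t) (F m (q:ℝ)) + dist (F m (q:ℝ)) (F n (q:ℝ)) + dist (F n (q:ℝ)) (F n t) :=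
        dist_triangle4 _ _ _ _
    _ < ε := by linarith

lemma energy_le (a μ h0 hd0 ξ0 ξd0 : ℝ) (b : ℝ → ℝ) (D : ℝ → ℝ → ℝ)
    (hn ξn : ℝ → ℝ) (ha : 0 < a) (hb : Continuous b) (hμ : 0 < μ)
    (hDpos : HypDpos D)
    (hsol : IsGlobalSolution a μ b D h0 hd0 ξ0 ξd0 hn ξn)
    (t : ℝ) (ht : 0 ≤ t) :
    (1/2)*(deriv hn t)^2 + (1/(2*a))*(deriv ξn t - deriv hn t)^2 + potB b (ξn t)
      ≤ (1/2)*hd0^2 + (1/(2*a))*(ξd0 - hd0)^2 + potB b ξ0 := by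
  obtain ⟨hpos, hdiff, heq1, heq2, hi1, hi2, hi3, hi4⟩ := hsol
  set E : ℝ → ℝ := fun s =>
    (1/2)*(deriv hn s)^2 + (1/(2*a))*(deriv ξn s - deriv hn s)^2 + potB b (ξn s) with hE
  have hED : ∀ s : ℝ, 0 ≤ s →
      HasDerivAt E (-(μ * D (hn s) (ξn s)) * (deriv hn s)^2) s := by
    intro s hs
    obtain ⟨hdh, hddh, hdx, hddx⟩ := hdiff s hs
    have Hh' : HasDerivAt (deriv hn) (deriv (deriv hn) s) s := hddh.hasDerivAt
    have Hx' : HasDerivAt (deriv ξn) (deriv (deriv ξn) s) s := hddx.hasDerivAt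
    have Hx : HasDerivAt ξn (deriv ξn s) s := hdx.hasDerivAt
    have H1 : HasDerivAt (fun u => (1/2 : ℝ) * (deriv hn u)^2)
        ((1/2 : ℝ) * ((2:ℕ) * (deriv hn s)^1 * deriv (deriv hn) s)) s :=
      (Hh'.pow 2).const_mul _
    have H2 : HasDerivAt (fun u => (1/(2*a) : ℝ) * (deriv ξn u - deriv hn u)^2)
        ((1/(2*a) : ℝ) * ((2:ℕ) * (deriv ξn s - deriv hn s)^1 *
          (deriv (deriv ξn) s - deriv (deriv hn) s))) s :=
      ((Hx'.sub Hh').pow 2).const_mul _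
    have H3 : HasDerivAt (fun u => potB b (ξn u)) (b (ξn s) * deriv ξn s) s :=
      (potB_hasDerivAt hb (ξn s)).comp s Hx
    have HA := (H1.add H2).add H3
    have e1 := heq1 s hs
    have e2 := heq2 s hs
    have hanz : a ≠ 0 := ne_of_gt ha
    have e3 : deriv (deriv ξn) s =
        - b (ξn s) - μ * D (hn s) (ξn s) * deriv hn s - a * b (ξn s) := by linarith
    refine HA.congr_deriv ?_
    rw [e2, e3]
    field_simp
    ring
  have hanti : AntitoneOn E (Ici 0) := by
    apply antitoneOn_of_deriv_nonpos (convex_Ici 0)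
    · exact fun s hs => ((hED s hs).differentiableAt.continuousAt).continuousWithinAt
    · intro s hs
      rw [interior_Ici] at hs
      exact (hED s hs.le).differentiableAt.differentiableWithinAt
    · intro s hs
      rw [interior_Ici] at hs
      rw [(hED s hs.le).deriv]
      have hD := hDpos (hn s) (ξn s) (hpos s hs.le)
      nlinarith [sq_nonneg (deriv hn s), mul_pos hμ hD,
        mul_nonneg (mul_pos hμ hD).le (sq_nonneg (deriv hn s))]
  have h0mem : (0:ℝ) ∈ Ici (0:ℝ) := self_mem_Ici
  have := hanti h0mem ht ht
  rw [hE] at this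
  simpa [hi2, hi3, hi4] using this

/-- Lemma 3.5: uniform bounds on `ξ_n, ḣ_n, ξ̇_n` and compactness: a subsequence
of `(h_n, ξ_n)` converges uniformly on compact subsets of `[0,∞)` to Lipschitz
functions `h, ξ`, with `h` nonnegative. -/
theorem uniform_bounds_and_compactness
    (a h0 hd0 ξ0 ξd0 c α : ℝ) (b : ℝ → ℝ) (D : ℝ → ℝ → ℝ)
    (μseq : ℕ → ℝ) (h ξ : ℕ → ℝ → ℝ)
    (ha : 0 < a) (hh0 : 0 < h0)
    (hB1 : HypB1 b) (hB2 : HypB2 b)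
    (hDpos : HypDpos D) (hD1 : HypD1 D) (hD2 : HypD2 D c α)
    (hμpos : ∀ n, 0 < μseq n) (hμ0 : Tendsto μseq atTop (nhds 0))
    (hsol : ∀ n, IsGlobalSolution a (μseq n) b D h0 hd0 ξ0 ξd0 (h n) (ξ n)) :
    (∃ C : ℝ, ∀ n : ℕ, ∀ t : ℝ, 0 ≤ t →
        |ξ n t| ≤ C ∧ |deriv (h n) t| ≤ C ∧ |deriv (ξ n) t| ≤ C) ∧
    (∃ φ : ℕ → ℕ, StrictMono φ ∧ ∃ hl ξl : ℝ → ℝ,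
        (∃ L : NNReal, LipschitzOnWith L hl (Set.Ici 0)) ∧
        (∃ L : NNReal, LipschitzOnWith L ξl (Set.Ici 0)) ∧
        (∀ t : ℝ, 0 ≤ t → 0 ≤ hl t) ∧
        (∀ K : Set ℝ, IsCompact K → K ⊆ Set.Ici 0 →
          TendstoUniformlyOn (fun n t => h (φ n) t) hl atTop K ∧
          TendstoUniformlyOn (fun n t => ξ (φ n) t) ξl atTop K)) := by
  have hbc : Continuous b := hB1.continuous
  obtain ⟨y₀, hy₀⟩ := Continuous.exists_forall_le (potB_continuous hbc) hB2
  obtain ⟨m, hm⟩ : ∃ m : ℝ, m = potB b y₀ := ⟨_, rfl⟩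
  rw [← hm] at hy₀
  obtain ⟨E0, hE0⟩ : ∃ E0 : ℝ,
      E0 = (1/2)*hd0^2 + (1/(2*a))*(ξd0 - hd0)^2 + potB b ξ0 := ⟨_, rfl⟩
  obtain ⟨M, hMdef⟩ : ∃ M : ℝ, M = E0 - m := ⟨_, rfl⟩
  have h2a : (0:ℝ) < 1/(2*a) := by positivity
  have hMnn : 0 ≤ M := by
    have := hy₀ ξ0
    rw [hMdef, hE0]
    nlinarith [sq_nonneg hd0, sq_nonneg (ξd0 - hd0),
      mul_nonneg h2a.le (sq_nonneg (ξd0 - hd0))]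
  have hEn : ∀ n t, 0 ≤ t →
      (1/2)*(deriv (h n) t)^2 + (1/(2*a))*(deriv (ξ n) t - deriv (h n) t)^2
        + potB b (ξ n t) ≤ E0 := by
    rw [hE0]
    exact fun n t ht => energy_le a (μseq n) h0 hd0 ξ0 ξd0 b D (h n) (ξ n) ha hbc
      (hμpos n) hDpos (hsol n) t ht
  have hdh2 : ∀ n t, 0 ≤ t → (deriv (h n) t)^2 ≤ 2*M := by
    intro n t ht
    have h1 := hEn n t ht
    have h2 := hy₀ (ξ n t)
    nlinarith [mul_nonneg h2a.le (sq_nonneg (deriv (ξ n) t - deriv (h n) t))]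
  have hdx2 : ∀ n t, 0 ≤ t → (deriv (ξ n) t - deriv (h n) t)^2 ≤ 2*a*M := by
    intro n t ht
    have h1 := hEn n t ht
    have h2 := hy₀ (ξ n t)
    have h3 : (1/(2*a))*(deriv (ξ n) t - deriv (h n) t)^2 ≤ M := by
      nlinarith [sq_nonneg (deriv (h n) t)]
    have ha' : (0:ℝ) < 2*a := by linarith
    calc (deriv (ξ n) t - deriv (h n) t)^2
        = (2*a) * ((1/(2*a))*(deriv (ξ n) t - deriv (h n) t)^2) := by
          field_simp
      _ ≤ (2*a) * M := by nlinarith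
  have hBle : ∀ n t, 0 ≤ t → potB b (ξ n t) ≤ E0 := by
    intro n t ht
    have h1 := hEn n t ht
    nlinarith [sq_nonneg (deriv (h n) t),
      mul_nonneg h2a.le (sq_nonneg (deriv (ξ n) t - deriv (h n) t))]
  have hcc : {y : ℝ | E0 < potB b y} ∈ cocompact ℝ := hB2.eventually (eventually_gt_atTop E0)
  obtain ⟨Kc, hKc, hKsub⟩ := Filter.mem_cocompact.mp hcc
  obtain ⟨R, hR⟩ := hKc.isBounded.subset_closedBall 0
  have hξbd : ∀ n t, 0 ≤ t → |ξ n t| ≤ R := by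
    intro n t ht
    by_contra hcon
    have hnot : ξ n t ∉ Kc := by
      intro hmem
      have := hR hmem
      rw [mem_closedBall_zero_iff, Real.norm_eq_abs] at this
      exact hcon this
    exact absurd (hBle n t ht) (not_le_of_gt (hKsub hnot))
  set Ch : ℝ := Real.sqrt (2*M) with hChdef
  set Cx : ℝ := Real.sqrt (2*a*M) with hCxdef
  have hChnn : 0 ≤ Ch := Real.sqrt_nonneg _
  have hCxnn : 0 ≤ Cx := Real.sqrt_nonneg _
  have hCh : ∀ n t, 0 ≤ t → |deriv (h n) t| ≤ Ch := by
    intro n t ht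
    rw [hChdef, ← Real.sqrt_sq_eq_abs]
    exact Real.sqrt_le_sqrt (by rw [sq]; nlinarith [hdh2 n t ht])
  have hCxd : ∀ n t, 0 ≤ t → |deriv (ξ n) t| ≤ Ch + Cx := by
    intro n t ht
    have h1 : |deriv (ξ n) t - deriv (h n) t| ≤ Cx := by
      rw [hCxdef, ← Real.sqrt_sq_eq_abs]
      exact Real.sqrt_le_sqrt (by rw [sq]; nlinarith [hdx2 n t ht])
    have h2 := hCh n t ht
    have h3 : |deriv (ξ n) t| ≤ |deriv (h n) t| + |deriv (ξ n) t - deriv (h n) t| := by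
      have := abs_add_le (deriv (h n) t) (deriv (ξ n) t - deriv (h n) t)
      simpa using this
    linarith
  set C : ℝ := Ch + (Ch + Cx) + max R 0 with hCdef
  have hRC : R ≤ C := by
    rw [hCdef]
    have := le_max_left R 0
    linarith
  have hCξ : ∀ n t, 0 ≤ t → |ξ n t| ≤ C := fun n t ht => le_trans (hξbd n t ht) hRC
  constructor
  · refine ⟨C, fun n t ht => ⟨hCξ n t ht, ?_, ?_⟩⟩
    · have := hCh n t ht
      rw [hCdef]
      have := le_max_right R 0
      linarith [hCh n t ht]
    · rw [hCdef]
      have := le_max_right R 0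
      linarith [hCxd n t ht]
  -- Part 2: compactness
  · set Lr : ℝ := Ch + (Ch + Cx) with hLrdef
    have hLrnn : 0 ≤ Lr := by rw [hLrdef]; linarith
    set L : NNReal := Real.toNNReal Lr with hLdef
    have hLcoe : (L : ℝ) = Lr := Real.coe_toNNReal _ hLrnn
    have hLiph : ∀ n, LipschitzOnWith L (h n) (Ici 0) := by
      intro n
      refine Convex.lipschitzOnWith_of_nnnorm_deriv_le
        (fun x hx => ((hsol n).2.1 x hx).1) (fun x hx => ?_) (convex_Ici 0)
      rw [← NNReal.coe_le_coe, coe_nnnorm, Real.norm_eq_abs, hLcoe, hLrdef]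
      linarith [hCh n x hx]
    have hLipx : ∀ n, LipschitzOnWith L (ξ n) (Ici 0) := by
      intro n
      refine Convex.lipschitzOnWith_of_nnnorm_deriv_le
        (fun x hx => ((hsol n).2.1 x hx).2.2.1) (fun x hx => ?_) (convex_Ici 0)
      rw [← NNReal.coe_le_coe, coe_nnnorm, Real.norm_eq_abs, hLcoe, hLrdef]
      linarith [hCxd n x hx]
    have hmax : LipschitzWith 1 (fun t : ℝ => max t 0) := by
      refine LipschitzWith.of_dist_le_mul fun x y => ?_
      rw [Real.dist_eq, Real.dist_eq, NNReal.coe_one, one_mul]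
      exact abs_max_sub_max_le_abs x y 0
    have hmaps : ∀ x : ℝ, max x 0 ∈ Ici (0:ℝ) := fun x => mem_Ici.mpr (le_max_right x 0)
    set v : ℕ → ℝ → ℝ := fun n t => h n (max t 0) with hvdef
    set w : ℕ → ℝ → ℝ := fun n t => ξ n (max t 0) with hwdef
    have hLv : ∀ n, LipschitzWith L (v n) := by
      intro n
      have hcomp := LipschitzOnWith.comp (hLiph n)
        (hmax.lipschitzOnWith (s := univ)) (fun x _ => hmaps x)
      rw [mul_one] at hcomp
      exact lipschitzOnWith_univ.mp hcomp
    have hLw : ∀ n, LipschitzWith L (w n) := by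
      intro n
      have hcomp := LipschitzOnWith.comp (hLipx n)
        (hmax.lipschitzOnWith (s := univ)) (fun x _ => hmaps x)
      rw [mul_one] at hcomp
      exact lipschitzOnWith_univ.mp hcomp
    have hmaxabs : ∀ q : ℝ, |max q 0| ≤ |q| := by
      intro q
      rcases le_total q 0 with hq | hq
      · simp [max_eq_right hq]
      · simp [max_eq_left hq]
    have hvbd : ∀ n (q : ℝ), |v n q| ≤ |h0| + (L:ℝ) * |q| := by
      intro n q
      have h1 : dist (v n q) (h n 0) ≤ (L:ℝ) * dist (max q 0) 0 :=
        (hLiph n).dist_le_mul _ (hmaps q) _ self_mem_Ici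
      rw [(hsol n).2.2.2.2.1, Real.dist_eq, Real.dist_eq, sub_zero] at h1
      have h2 : (L:ℝ) * |max q 0| ≤ (L:ℝ) * |q| :=
        mul_le_mul_of_nonneg_left (hmaxabs q) (by positivity)
      calc |v n q| = |(v n q - h0) + h0| := by ring_nf
        _ ≤ |v n q - h0| + |h0| := abs_add_le _ _
        _ ≤ (L:ℝ) * |q| + |h0| := by linarith
        _ = |h0| + (L:ℝ) * |q| := by ring
    set Rq : ℚ → ℝ := fun q => |h0| + C + (L:ℝ) * |(q:ℝ)| with hRqdef
    have hCnn : 0 ≤ C := le_trans (abs_nonneg _) (hCξ 0 0 le_rfl)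
    have humem : ∀ n, (fun q : ℚ => ((v n q, w n q) : ℝ × ℝ)) ∈
        Set.pi univ (fun q : ℚ => closedBall (0 : ℝ × ℝ) (Rq q)) := by
      intro n
      rw [Set.mem_univ_pi]
      intro q
      rw [mem_closedBall_zero_iff, Prod.norm_def]
      have hLqnn : 0 ≤ (L:ℝ) * |(q:ℝ)| := by positivity
      refine max_le ?_ ?_
      · rw [Real.norm_eq_abs]
        have := hvbd n q
        rw [hRqdef]
        dsimp only
        linarith
      · rw [Real.norm_eq_abs]
        have hb1 : |w n (q:ℝ)| ≤ C := hCξ n (max (q:ℝ) 0) (le_max_right _ _)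
        rw [hRqdef]
        dsimp only
        have := abs_nonneg h0
        linarith
    obtain ⟨ul, -, φ, hφmono, hconv⟩ :=
      (isCompact_univ_pi (fun q : ℚ => isCompact_closedBall (0 : ℝ × ℝ) (Rq q))).tendsto_subseq
        (x := fun n => fun q : ℚ => ((v n q, w n q) : ℝ × ℝ)) humem
    have hqconv : ∀ q : ℚ, Tendsto (fun n => ((v (φ n) q, w (φ n) q) : ℝ × ℝ))
        atTop (𝓝 (ul q)) := fun q => tendsto_pi_nhds.mp hconv q
    have hqv : ∀ q : ℚ, ∃ l, Tendsto (fun n => v (φ n) (q:ℝ)) atTop (𝓝 l) :=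
      fun q => ⟨(ul q).1, (continuous_fst.tendsto _).comp (hqconv q)⟩
    have hqw : ∀ q : ℚ, ∃ l, Tendsto (fun n => w (φ n) (q:ℝ)) atTop (𝓝 l) :=
      fun q => ⟨(ul q).2, (continuous_snd.tendsto _).comp (hqconv q)⟩
    have hLvφ : ∀ n, LipschitzWith L (fun t => v (φ n) t) := fun n => hLv (φ n)
    have hLwφ : ∀ n, LipschitzWith L (fun t => w (φ n) t) := fun n => hLw (φ n)
    have hlimv : ∀ t, ∃ l, Tendsto (fun n => v (φ n) t) atTop (𝓝 l) :=
      fun t => cauchySeq_tendsto_of_complete (cauchy_of_rat hLvφ hqv t)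
    have hlimw : ∀ t, ∃ l, Tendsto (fun n => w (φ n) t) atTop (𝓝 l) :=
      fun t => cauchySeq_tendsto_of_complete (cauchy_of_rat hLwφ hqw t)
    choose hl hhl using hlimv
    choose ξl hξl using hlimw
    have hlLip : LipschitzWith L hl :=
      LipschitzWith.of_dist_le_mul fun s t =>
        le_of_tendsto ((hhl s).dist (hhl t))
          (Eventually.of_forall fun n => (hLvφ n).dist_le_mul s t)
    have hξlLip : LipschitzWith L ξl :=
      LipschitzWith.of_dist_le_mul fun s t =>
        le_of_tendsto ((hξl s).dist (hξl t))
          (Eventually.of_forall fun n => (hLwφ n).dist_le_mul s t)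
    have hlnn : ∀ t : ℝ, 0 ≤ hl t := fun t =>
      ge_of_tendsto (hhl t)
        (Eventually.of_forall fun n =>
          le_of_lt ((hsol (φ n)).1 (max t 0) (le_max_right t 0)))
    refine ⟨φ, hφmono, hl, ξl, ⟨L, hlLip.lipschitzOnWith⟩, ⟨L, hξlLip.lipschitzOnWith⟩,
      fun t _ => hlnn t, fun K hK hKsub => ?_⟩
    have huv : TendstoUniformlyOn (fun n t => v (φ n) t) hl atTop K :=
      tendstoUniformlyOn_of_lipschitz hLvφ hhl hK
    have huw : TendstoUniformlyOn (fun n t => w (φ n) t) ξl atTop K :=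
      tendstoUniformlyOn_of_lipschitz hLwφ hξl hK
    constructor
    · refine huv.congr (Eventually.of_forall fun n t htK => ?_)
      show v (φ n) t = h (φ n) t
      rw [hvdef]
      dsimp only
      rw [max_eq_left (hKsub htK)]
    · refine huw.congr (Eventually.of_forall fun n t htK => ?_)
      show w (φ n) t = ξ (φ n) t
      rw [hwdef]
      dsimp only
      rw [max_eq_left (hKsub htK)]
end
end

section
/- Identification of the limit before impact, case ḣ₀ ≥ 0 (Lemma 3.6(i)): Assume (B1), (B2), (D1), (D2), b(0) = 0, initial data ξ₀ = ξ̇₀ = 0, h₀ > 0, ḣ₀ ≥ 0. Let μ_n → 0⁺, let (h_n, ξ_n) be the corresponding global solutions of (gf), and suppose h_n → h and ξ_n → ξ uniformly on compact subsets of [0,∞). Then h(t) = h₀ + ḣ₀·t and ξ(t) = 0 for every t ≥ 0. -/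
open Real Filter Set MeasureTheory Metric
open scoped Topology

noncomputable section

/-! ### Auxiliary lemmas -/

lemma myGronwallBound_mono {δ K ε : ℝ} (hδ : 0 ≤ δ) (hK : 0 ≤ K) (hε : 0 ≤ ε)
    {s t : ℝ} (hs : 0 ≤ s) (hst : s ≤ t) :
    gronwallBound δ K ε s ≤ gronwallBound δ K ε t := by
  unfold gronwallBound
  split_ifs with hK0
  · nlinarith
  · have hK' : 0 < K := lt_of_le_of_ne hK (Ne.symm hK0)
    have h1 : Real.exp (K * s) ≤ Real.exp (K * t) := by
      apply Real.exp_le_exp.2; nlinarith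
    have h2 : (1 : ℝ) ≤ Real.exp (K * s) := by
      rw [← Real.exp_zero]; apply Real.exp_le_exp.2; positivity
    have h3 : 0 ≤ ε / K := div_nonneg hε hK
    nlinarith

lemma exists_linear_bound_of_locallyLipschitz {b : ℝ → ℝ} (hB1 : LocallyLipschitz b)
    (hb0 : b 0 = 0) (R : ℝ) :
    ∃ L : ℝ, 0 ≤ L ∧ ∀ y : ℝ, |y| ≤ R → |b y| ≤ L * |y| := by
  obtain ⟨K, t, ht, hK⟩ := hB1 0
  obtain ⟨r, hr, hball⟩ := Metric.mem_nhds_iff.1 ht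
  obtain ⟨C, hC⟩ := (isCompact_Icc (a := -R) (b := R)).exists_bound_of_continuousOn
      (hB1.continuous.continuousOn)
  have hr2 : 0 < r / 2 := by linarith
  refine ⟨max (K : ℝ) (max C 0 / (r / 2)), le_max_of_le_left K.2, ?_⟩
  intro y hy
  rcases lt_or_ge (|y|) (r / 2) with hcase | hcase
  · have hy0 : y ∈ t := hball (by
      rw [Metric.mem_ball, Real.dist_eq, sub_zero]; linarith)
    have h00 : (0 : ℝ) ∈ t := hball (by
      rw [Metric.mem_ball, Real.dist_eq, sub_zero, abs_zero]; exact hr)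
    have := hK.dist_le_mul y hy0 0 h00
    rw [Real.dist_eq, Real.dist_eq, hb0, sub_zero, sub_zero] at this
    refine this.trans ?_
    have : (K : ℝ) ≤ max (K : ℝ) (max C 0 / (r / 2)) := le_max_left _ _
    nlinarith [abs_nonneg y]
  · have hyI : y ∈ Icc (-R) R := by
      rcases abs_le.1 hy with ⟨h1, h2⟩; exact ⟨h1, h2⟩
    have h1 : |b y| ≤ max C 0 := le_trans (by
      have := hC y hyI; rwa [Real.norm_eq_abs] at this) (le_max_left _ _)
    have h2 : max C 0 / (r / 2) ≤ max (K : ℝ) (max C 0 / (r / 2)) := le_max_right _ _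
    have h3 : (0 : ℝ) ≤ max C 0 := le_max_right _ _
    have h4 : max C 0 = max C 0 / (r / 2) * (r / 2) := by field_simp
    have h5 : max C 0 / (r / 2) * (r / 2) ≤ max C 0 / (r / 2) * |y| := by
      have : (0:ℝ) ≤ max C 0 / (r / 2) := div_nonneg h3 hr2.le
      nlinarith
    have h6 : (0:ℝ) ≤ |y| := abs_nonneg y
    nlinarith

lemma exists_D_bound {D : ℝ → ℝ → ℝ} (hD1 : HypD1 D) {δ H R : ℝ} (hδ : 0 < δ) :
    ∃ C : ℝ, 0 ≤ C ∧ ∀ x y : ℝ, x ∈ Icc δ H → y ∈ Icc (-R) R → D x y ≤ C := by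
  have hcont : ContinuousOn (fun q : ℝ × ℝ => D q.1 q.2) (Icc δ H ×ˢ Icc (-R) R) := by
    intro p hp
    have hp1 : 0 < p.1 := lt_of_lt_of_le hδ hp.1.1
    obtain ⟨ε, hε, L, hL⟩ := hD1 p hp1
    have hsub : Metric.ball p (min ε p.1) ⊆ Metric.ball p ε ∩ {q : ℝ × ℝ | 0 < q.1} := by
      intro q hq
      have hd : dist q p < min ε p.1 := Metric.mem_ball.1 hq
      refine ⟨Metric.mem_ball.2 (hd.trans_le (min_le_left _ _)), ?_⟩
      have h1 : dist q.1 p.1 ≤ dist q p := by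
        rw [Prod.dist_eq]; exact le_max_left _ _
      have h2 : |q.1 - p.1| < p.1 := by
        rw [← Real.dist_eq]; exact lt_of_le_of_lt h1 (hd.trans_le (min_le_right _ _))
      have := abs_lt.1 h2
      simpa using by linarith [this.1]
    have : ContinuousAt (fun q : ℝ × ℝ => D q.1 q.2) p :=
      ((hL.mono hsub).continuousOn).continuousAt (Metric.ball_mem_nhds p (lt_min hε hp1))
    exact this.continuousWithinAt
  obtain ⟨C, hC⟩ := (isCompact_Icc.prod isCompact_Icc).exists_bound_of_continuousOn hcont
  refine ⟨max C 0, le_max_right _ _, fun x y hx hy => ?_⟩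
  have := hC (x, y) (Set.mk_mem_prod hx hy)
  rw [Real.norm_eq_abs] at this
  exact le_trans (le_trans (le_abs_self _) this) (le_max_left _ _)

set_option maxHeartbeats 1000000 in
/-- Lemma 3.6(i): identification of the vanishing-viscosity limit for `ḣ₀ ≥ 0`:
the limit is `h(t) = h₀ + ḣ₀·t`, `ξ(t) = 0` for all `t ≥ 0`. -/
theorem limit_identification_nonneg_velocity
    (a h0 hd0 c α : ℝ) (b : ℝ → ℝ) (D : ℝ → ℝ → ℝ)
    (μseq : ℕ → ℝ) (h ξ : ℕ → ℝ → ℝ) (hl ξl : ℝ → ℝ)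
    (ha : 0 < a) (hh0 : 0 < h0) (hhd0 : 0 ≤ hd0)
    (hb0 : b 0 = 0)
    (hB1 : HypB1 b) (hB2 : HypB2 b)
    (hDpos : HypDpos D) (hD1 : HypD1 D) (hD2 : HypD2 D c α)
    (hμpos : ∀ n, 0 < μseq n) (hμ0 : Tendsto μseq atTop (nhds 0))
    (hsol : ∀ n, IsGlobalSolution a (μseq n) b D h0 hd0 0 0 (h n) (ξ n))
    (hconvh : ∀ K : Set ℝ, IsCompact K → K ⊆ Set.Ici 0 →
      TendstoUniformlyOn (fun n t => h n t) hl atTop K)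
    (hconvξ : ∀ K : Set ℝ, IsCompact K → K ⊆ Set.Ici 0 →
      TendstoUniformlyOn (fun n t => ξ n t) ξl atTop K) :
    ∀ t : ℝ, 0 ≤ t → hl t = h0 + hd0 * t ∧ ξl t = 0 := by
  have hpos : ∀ n, ∀ s : ℝ, 0 ≤ s → 0 < h n s := fun n => (hsol n).1
  have hdiff : ∀ n, ∀ s : ℝ, 0 ≤ s → DifferentiableAt ℝ (h n) s ∧
      DifferentiableAt ℝ (deriv (h n)) s ∧ DifferentiableAt ℝ (ξ n) s ∧
      DifferentiableAt ℝ (deriv (ξ n)) s := fun n => (hsol n).2.1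
  have heq1 : ∀ n, ∀ s : ℝ, 0 ≤ s →
      deriv (deriv (h n)) s - deriv (deriv (ξ n)) s = a * b (ξ n s) := fun n => (hsol n).2.2.1
  have heq2 : ∀ n, ∀ s : ℝ, 0 ≤ s → deriv (deriv (h n)) s =
      - b (ξ n s) - μseq n * D (h n s) (ξ n s) * deriv (h n) s := fun n => (hsol n).2.2.2.1
  have hinit : ∀ n, h n 0 = h0 ∧ deriv (h n) 0 = hd0 ∧ ξ n 0 = 0 ∧ deriv (ξ n) 0 = 0 :=
    fun n => (hsol n).2.2.2.2
  have hIccIci : ∀ T : ℝ, Icc (0:ℝ) T ⊆ Ici 0 := fun T s hs => hs.1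
  have hlcont : ∀ T : ℝ, ContinuousOn hl (Icc 0 T) := fun T =>
    (hconvh _ isCompact_Icc (hIccIci T)).continuousOn
      (Filter.Eventually.frequently <| Filter.Eventually.of_forall fun n (s : ℝ) (hs : s ∈ Icc (0:ℝ) T) =>
        ((hdiff n s hs.1).1.continuousAt).continuousWithinAt)
  have hξlcont : ∀ T : ℝ, ContinuousOn ξl (Icc 0 T) := fun T =>
    (hconvξ _ isCompact_Icc (hIccIci T)).continuousOn
      (Filter.Eventually.frequently <| Filter.Eventually.of_forall fun n (s : ℝ) (hs : s ∈ Icc (0:ℝ) T) =>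
        ((hdiff n s hs.1).2.2.1.continuousAt).continuousWithinAt)
  have hl0 : hl 0 = h0 := by
    have h1 : Tendsto (fun n => h n 0) atTop (𝓝 (hl 0)) :=
      (hconvh (Icc 0 0) isCompact_Icc (hIccIci 0)).tendsto_at (by simp)
    have h2 : (fun n => h n 0) = fun _ : ℕ => h0 := funext fun n => (hinit n).1
    rw [h2] at h1
    exact tendsto_nhds_unique h1 tendsto_const_nhds
  -- Key step: if `hl ≥ h0/2` on `[0,T]`, then the identification holds on `[0,T]`.
  have key : ∀ T : ℝ, 0 ≤ T → (∀ s ∈ Icc (0:ℝ) T, h0 / 2 ≤ hl s) →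
      ∀ t ∈ Icc (0:ℝ) T, hl t = h0 + hd0 * t ∧ ξl t = 0 := by
    intro T hT hbig
    obtain ⟨Rξ, hRξ⟩ := isCompact_Icc.exists_bound_of_continuousOn (hξlcont T)
    have hRξ0 : 0 ≤ Rξ := le_trans (norm_nonneg _) (hRξ 0 (left_mem_Icc.2 hT))
    obtain ⟨Hm, hHm⟩ := isCompact_Icc.exists_bound_of_continuousOn (hlcont T)
    obtain ⟨L, hL0, hLb⟩ := exists_linear_bound_of_locallyLipschitz hB1 hb0 (Rξ + 1)
    obtain ⟨CD, hCD0, hCDb⟩ :=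
      exists_D_bound hD1 (δ := h0 / 4) (H := Hm + h0 / 4) (R := Rξ + 1) (by linarith)
    set R : ℝ := Rξ + 1 with hRdef
    have hR1 : (1:ℝ) ≤ R := by simp only [hRdef]; linarith
    set Cb : ℝ := L * R with hCbdef
    have hCb0 : 0 ≤ Cb := mul_nonneg hL0 (by linarith)
    set M : ℝ := gronwallBound hd0 CD Cb T with hMdef
    have hMd : hd0 ≤ M := by
      have := myGronwallBound_mono hhd0 hCD0 hCb0 le_rfl hT
      rw [gronwallBound_x0] at this
      rw [hMdef]; exact this
    have hM0 : 0 ≤ M := le_trans hhd0 hMd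
    set K : ℝ := max 1 ((1 + a) * L) with hKdef
    have hK1 : (1:ℝ) ≤ K := le_max_left _ _
    have hK0 : (0:ℝ) < K := lt_of_lt_of_le one_pos hK1
    set CDM : ℝ := CD * M with hCDMdef
    have hCDM0 : 0 ≤ CDM := mul_nonneg hCD0 hM0
    set δf : ℕ → ℝ := fun n => gronwallBound 0 K (μseq n * CDM) T with hδfdef
    have hδf0 : ∀ n, 0 ≤ δf n := by
      intro n
      have := myGronwallBound_mono le_rfl hK0.le (mul_nonneg (hμpos n).le hCDM0) le_rfl hT
      rw [gronwallBound_x0] at this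
      simpa only [hδfdef] using this
    set ηf : ℕ → ℝ := fun n => L * δf n + μseq n * CDM with hηfdef
    have hηf0 : ∀ n, 0 ≤ ηf n := fun n =>
      add_nonneg (mul_nonneg hL0 (hδf0 n)) (mul_nonneg (hμpos n).le hCDM0)
    have hev1 : ∀ᶠ n in atTop, ∀ s ∈ Icc (0:ℝ) T, dist (hl s) (h n s) < h0 / 4 :=
      (Metric.tendstoUniformlyOn_iff.1 (hconvh _ isCompact_Icc (hIccIci T))) (h0/4)
        (by linarith)
    have hev2 : ∀ᶠ n in atTop, ∀ s ∈ Icc (0:ℝ) T, dist (ξl s) (ξ n s) < 1 :=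
      (Metric.tendstoUniformlyOn_iff.1 (hconvξ _ isCompact_Icc (hIccIci T))) 1 one_pos
    have hev3 : ∀ᶠ n in atTop, μseq n < 1 := hμ0.eventually (eventually_lt_nhds one_pos)
    have main_est : ∀ᶠ n in atTop, ∀ t ∈ Icc (0:ℝ) T,
        |ξ n t| ≤ δf n ∧ |h n t - (h0 + hd0 * t)| ≤ ηf n * T * t := by
      filter_upwards [hev1, hev2, hev3] with n hn1 hn2 hn3
      have hμ1 : μseq n ≤ 1 := hn3.le
      have hμp : 0 < μseq n := hμpos n
      have hlow : ∀ s ∈ Icc (0:ℝ) T, h0 / 4 ≤ h n s := by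
        intro s hs
        have h1 := hn1 s hs
        rw [Real.dist_eq] at h1
        have h2 := abs_lt.1 h1
        have h3 := hbig s hs
        linarith [h2.1, h2.2]
      have hhigh : ∀ s ∈ Icc (0:ℝ) T, h n s ≤ Hm + h0 / 4 := by
        intro s hs
        have h1 := hn1 s hs
        rw [Real.dist_eq] at h1
        have h2 := abs_lt.1 h1
        have h3 := hHm s hs
        rw [Real.norm_eq_abs] at h3
        have h4 := abs_le.1 h3
        linarith [h2.1, h4.2]
      have hξR : ∀ s ∈ Icc (0:ℝ) T, |ξ n s| ≤ R := by
        intro s hs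
        have h1 := hn2 s hs
        rw [Real.dist_eq] at h1
        have h2 := abs_lt.1 h1
        have h3 := hRξ s hs
        rw [Real.norm_eq_abs] at h3
        have h4 := abs_le.1 h3
        rw [hRdef, abs_le]
        exact ⟨by linarith [h2.2, h4.1], by linarith [h2.1, h4.2]⟩
      have hDb : ∀ s ∈ Icc (0:ℝ) T, D (h n s) (ξ n s) ≤ CD := by
        intro s hs
        have h4 := abs_le.1 (hξR s hs)
        exact hCDb _ _ ⟨hlow s hs, hhigh s hs⟩ ⟨h4.1, h4.2⟩
      have hDpos' : ∀ s ∈ Icc (0:ℝ) T, 0 < D (h n s) (ξ n s) :=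
        fun s hs => hDpos _ _ (hpos n s hs.1)
      have hbABS : ∀ s ∈ Icc (0:ℝ) T, |b (ξ n s)| ≤ L * |ξ n s| :=
        fun s hs => hLb _ (hξR s hs)
      -- Grönwall estimate for `deriv (h n)`
      have G1 : ∀ s ∈ Icc (0:ℝ) T, |deriv (h n) s| ≤ M := by
        have hbound : ∀ s ∈ Ico (0:ℝ) T,
            ‖deriv (deriv (h n)) s‖ ≤ CD * ‖deriv (h n) s‖ + Cb := by
          intro s hs
          have hsI : s ∈ Icc (0:ℝ) T := ⟨hs.1, hs.2.le⟩
          rw [heq2 n s hs.1]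
          simp only [Real.norm_eq_abs]
          have hb1 : |b (ξ n s)| ≤ Cb := by
            have hb1a := hbABS s hsI
            have hb1b := hξR s hsI
            rw [hCbdef]
            nlinarith [abs_nonneg (ξ n s)]
          have hb2 := hDpos' s hsI
          have hb3 := hDb s hsI
          have htri : |-b (ξ n s) - μseq n * D (h n s) (ξ n s) * deriv (h n) s| ≤
              |b (ξ n s)| + μseq n * D (h n s) (ξ n s) * |deriv (h n) s| := by
            calc |-b (ξ n s) - μseq n * D (h n s) (ξ n s) * deriv (h n) s|
                ≤ |-b (ξ n s)| + |μseq n * D (h n s) (ξ n s) * deriv (h n) s| := abs_sub _ _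
              _ = |b (ξ n s)| + μseq n * D (h n s) (ξ n s) * |deriv (h n) s| := by
                  rw [abs_neg, abs_mul, abs_mul, abs_of_pos hμp, abs_of_pos hb2]
          refine htri.trans ?_
          have h5a : μseq n * D (h n s) (ξ n s) ≤ CD := by nlinarith
          have h5 := mul_le_mul_of_nonneg_right h5a (abs_nonneg (deriv (h n) s))
          linarith
        have hgb := norm_le_gronwallBound_of_norm_deriv_right_le
          (f := deriv (h n)) (f' := deriv (deriv (h n))) (δ := hd0) (K := CD) (ε := Cb)
          (a := 0) (b := T)
          (fun s hs => ((hdiff n s hs.1).2.1.continuousAt).continuousWithinAt)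
          (fun s hs => ((hdiff n s hs.1).2.1.hasDerivAt).hasDerivWithinAt)
          (by rw [Real.norm_eq_abs, (hinit n).2.1, abs_of_nonneg hhd0])
          hbound
        intro s hs
        have h2 := hgb s hs
        rw [Real.norm_eq_abs, sub_zero] at h2
        refine h2.trans ?_
        rw [hMdef]
        exact myGronwallBound_mono hhd0 hCD0 hCb0 hs.1 hs.2
      have hξ'' : ∀ s : ℝ, 0 ≤ s → deriv (deriv (ξ n)) s =
          -(1 + a) * b (ξ n s) - μseq n * D (h n s) (ξ n s) * deriv (h n) s := by
        intro s hs
        have e1 := heq1 n s hs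
        have e2 := heq2 n s hs
        have e3 : deriv (deriv (ξ n)) s = deriv (deriv (h n)) s - a * b (ξ n s) := by
          linarith
        rw [e3, e2]; ring
      -- Grönwall estimate for `(ξ n, deriv (ξ n))`
      have G2 : ∀ s ∈ Icc (0:ℝ) T, |ξ n s| ≤ δf n ∧ |deriv (ξ n) s| ≤ δf n := by
        have hvc : ContinuousOn (fun s => ((ξ n s : ℝ), deriv (ξ n) s)) (Icc (0:ℝ) T) :=
          fun s hs => (((hdiff n s hs.1).2.2.1.continuousAt).prodMk
            ((hdiff n s hs.1).2.2.2.continuousAt)).continuousWithinAt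
        have hvd : ∀ s ∈ Ico (0:ℝ) T,
            HasDerivWithinAt (fun s => ((ξ n s : ℝ), deriv (ξ n) s))
              (deriv (ξ n) s, deriv (deriv (ξ n)) s) (Ici s) s := fun s hs =>
          (((hdiff n s hs.1).2.2.1.hasDerivAt).prodMk
            ((hdiff n s hs.1).2.2.2.hasDerivAt)).hasDerivWithinAt
        have hv0 : ‖((ξ n 0 : ℝ), deriv (ξ n) 0)‖ ≤ 0 := by
          rw [(hinit n).2.2.1, (hinit n).2.2.2]
          simp [Prod.norm_def]
        have hbound : ∀ s ∈ Ico (0:ℝ) T, ‖(deriv (ξ n) s, deriv (deriv (ξ n)) s)‖ ≤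
            K * ‖((ξ n s : ℝ), deriv (ξ n) s)‖ + μseq n * CDM := by
          intro s hs
          have hsI : s ∈ Icc (0:ℝ) T := ⟨hs.1, hs.2.le⟩
          have hε0 : 0 ≤ μseq n * CDM := mul_nonneg hμp.le hCDM0
          have hnv : (0:ℝ) ≤ ‖((ξ n s : ℝ), deriv (ξ n) s)‖ := norm_nonneg _
          rw [Prod.norm_def]
          apply max_le
          · have h1 : ‖deriv (ξ n) s‖ ≤ ‖((ξ n s : ℝ), deriv (ξ n) s)‖ := by exact norm_snd_le ((ξ n s, deriv (ξ n) s) : ℝ × ℝ)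
            nlinarith
          · rw [hξ'' s hs.1]
            simp only [Real.norm_eq_abs]
            have hb1 := hbABS s hsI
            have hb2 : |ξ n s| ≤ ‖((ξ n s : ℝ), deriv (ξ n) s)‖ := by
              rw [← Real.norm_eq_abs]; exact norm_fst_le ((ξ n s, deriv (ξ n) s) : ℝ × ℝ)
            have hD1' := hDpos' s hsI
            have hD2' := hDb s hsI
            have hdh := G1 s hsI
            have htri : |-(1 + a) * b (ξ n s) - μseq n * D (h n s) (ξ n s) * deriv (h n) s| ≤
                (1 + a) * |b (ξ n s)| + μseq n * D (h n s) (ξ n s) * |deriv (h n) s| := by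
              calc |-(1 + a) * b (ξ n s) - μseq n * D (h n s) (ξ n s) * deriv (h n) s|
                  ≤ |-(1 + a) * b (ξ n s)| +
                    |μseq n * D (h n s) (ξ n s) * deriv (h n) s| := abs_sub _ _
                _ = (1 + a) * |b (ξ n s)| +
                    μseq n * D (h n s) (ξ n s) * |deriv (h n) s| := by
                    rw [abs_mul, abs_mul, abs_mul, abs_neg,
                      abs_of_pos (by linarith : (0:ℝ) < 1 + a), abs_of_pos hμp,
                      abs_of_pos hD1']
            refine htri.trans ?_
            have e5 : μseq n * D (h n s) (ξ n s) * |deriv (h n) s| ≤ μseq n * CDM := by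
              rw [hCDMdef]
              have h6 : D (h n s) (ξ n s) * |deriv (h n) s| ≤ CD * M :=
                mul_le_mul hD2' hdh (abs_nonneg _) hCD0
              nlinarith
            have e6 : (1 + a) * |b (ξ n s)| ≤ K * ‖((ξ n s : ℝ), deriv (ξ n) s)‖ := by
              have h7 : (1 + a) * |b (ξ n s)| ≤ ((1 + a) * L) * |ξ n s| := by nlinarith
              refine h7.trans ?_
              have h8 : (1 + a) * L ≤ K := le_max_right _ _
              nlinarith [abs_nonneg (ξ n s), hK0.le]
            linarith
        have hgb := norm_le_gronwallBound_of_norm_deriv_right_le (E := ℝ × ℝ)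
          (f := fun s => ((ξ n s : ℝ), deriv (ξ n) s))
          (f' := fun s => (deriv (ξ n) s, deriv (deriv (ξ n)) s))
          (δ := 0) (K := K) (ε := μseq n * CDM) (a := 0) (b := T) hvc hvd hv0 hbound
        intro s hs
        have h2 := hgb s hs
        rw [sub_zero] at h2
        have h3 : gronwallBound 0 K (μseq n * CDM) s ≤ δf n := by
          simp only [hδfdef]
          exact myGronwallBound_mono le_rfl hK0.le (mul_nonneg hμp.le hCDM0) hs.1 hs.2
        constructor
        · have h4 : ‖(ξ n s : ℝ)‖ ≤ ‖((ξ n s : ℝ), deriv (ξ n) s)‖ := by exact norm_fst_le ((ξ n s, deriv (ξ n) s) : ℝ × ℝ)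
          rw [Real.norm_eq_abs] at h4
          exact h4.trans (h2.trans h3)
        · have h4 : ‖deriv (ξ n) s‖ ≤ ‖((ξ n s : ℝ), deriv (ξ n) s)‖ := by exact norm_snd_le ((ξ n s, deriv (ξ n) s) : ℝ × ℝ)
          rw [Real.norm_eq_abs] at h4
          exact h4.trans (h2.trans h3)
      -- mean value estimates for `h n`
      have H1 : ∀ s ∈ Icc (0:ℝ) T, |deriv (h n) s - hd0| ≤ ηf n * T := by
        have hbd : ∀ u ∈ Icc (0:ℝ) T, ‖deriv (deriv (h n)) u‖ ≤ ηf n := by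
          intro u hu
          rw [heq2 n u hu.1, Real.norm_eq_abs]
          have hb1 := hbABS u hu
          have hb2 := hDpos' u hu
          have hb3 := hDb u hu
          have hdh := G1 u hu
          have hξδ := (G2 u hu).1
          have htri : |-b (ξ n u) - μseq n * D (h n u) (ξ n u) * deriv (h n) u| ≤
              |b (ξ n u)| + μseq n * D (h n u) (ξ n u) * |deriv (h n) u| := by
            calc |-b (ξ n u) - μseq n * D (h n u) (ξ n u) * deriv (h n) u|
                ≤ |-b (ξ n u)| + |μseq n * D (h n u) (ξ n u) * deriv (h n) u| := abs_sub _ _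
              _ = |b (ξ n u)| + μseq n * D (h n u) (ξ n u) * |deriv (h n) u| := by
                  rw [abs_neg, abs_mul, abs_mul, abs_of_pos hμp, abs_of_pos hb2]
          refine htri.trans ?_
          have e5 : μseq n * D (h n u) (ξ n u) * |deriv (h n) u| ≤ μseq n * CDM := by
            rw [hCDMdef]
            have h6 : D (h n u) (ξ n u) * |deriv (h n) u| ≤ CD * M :=
              mul_le_mul hb3 hdh (abs_nonneg _) hCD0
            nlinarith
          have e6 : |b (ξ n u)| ≤ L * δf n := by
            refine hb1.trans ?_
            nlinarith
          simp only [hηfdef]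
          linarith
        intro s hs
        have hmvt := Convex.norm_image_sub_le_of_norm_hasDerivWithin_le
          (f := deriv (h n)) (f' := deriv (deriv (h n))) (s := Icc (0:ℝ) T) (C := ηf n)
          (fun u hu => ((hdiff n u hu.1).2.1.hasDerivAt).hasDerivWithinAt)
          hbd (convex_Icc 0 T) (left_mem_Icc.2 hT) hs
        rw [(hinit n).2.1] at hmvt
        simp only [Real.norm_eq_abs, sub_zero] at hmvt
        rw [abs_of_nonneg hs.1] at hmvt
        refine hmvt.trans ?_
        nlinarith [hηf0 n, hs.2, hs.1]
      have H2 : ∀ t ∈ Icc (0:ℝ) T, |h n t - (h0 + hd0 * t)| ≤ ηf n * T * t := by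
        intro t ht
        have hmvt := Convex.norm_image_sub_le_of_norm_hasDerivWithin_le
          (f := fun u => h n u - hd0 * u) (f' := fun u => deriv (h n) u - hd0)
          (s := Icc (0:ℝ) T) (C := ηf n * T)
          (fun u hu => by
            have hder : HasDerivAt (fun w => h n w - hd0 * w) (deriv (h n) u - hd0) u := by
              have := ((hdiff n u hu.1).1.hasDerivAt).sub ((hasDerivAt_id u).const_mul hd0)
              rw [mul_one] at this; exact this
            exact hder.hasDerivWithinAt)
          (fun u hu => by rw [Real.norm_eq_abs]; exact H1 u hu)
          (convex_Icc 0 T) (left_mem_Icc.2 hT) ht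
        simp only [Real.norm_eq_abs, sub_zero, mul_zero] at hmvt
        rw [(hinit n).1, abs_of_nonneg ht.1] at hmvt
        have e1 : h n t - (h0 + hd0 * t) = h n t - hd0 * t - h0 := by ring
        rw [e1]
        exact hmvt
      exact fun t ht => ⟨(G2 t ht).1, H2 t ht⟩
    -- pass to the limit
    have hμCDM : Tendsto (fun n => μseq n * CDM) atTop (𝓝 0) := by
      simpa using hμ0.mul_const CDM
    have hδlim : Tendsto δf atTop (𝓝 0) := by
      have h2 := ((gronwallBound_continuous_ε 0 K T).tendsto 0).comp hμCDM
      rw [gronwallBound_ε0_δ0] at h2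
      simpa only [hδfdef, Function.comp_def] using h2
    have hηlim : Tendsto ηf atTop (𝓝 0) := by
      have h2 := (hδlim.const_mul L).add hμCDM
      simpa only [hηfdef, mul_zero, add_zero] using h2
    intro t ht
    have hconvξt : Tendsto (fun n => ξ n t) atTop (𝓝 (ξl t)) :=
      (hconvξ _ isCompact_Icc (hIccIci T)).tendsto_at ht
    have hconvht : Tendsto (fun n => h n t) atTop (𝓝 (hl t)) :=
      (hconvh _ isCompact_Icc (hIccIci T)).tendsto_at ht
    have hξ0 : Tendsto (fun n => ξ n t) atTop (𝓝 0) := by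
      refine squeeze_zero_norm' ?_ hδlim
      filter_upwards [main_est] with n hn
      rw [Real.norm_eq_abs]; exact (hn t ht).1
    have hht : Tendsto (fun n => h n t) atTop (𝓝 (h0 + hd0 * t)) := by
      have h1 : Tendsto (fun n => h n t - (h0 + hd0 * t)) atTop (𝓝 0) := by
        refine squeeze_zero_norm' (a := fun n => ηf n * T * t) ?_ ?_
        · filter_upwards [main_est] with n hn
          rw [Real.norm_eq_abs]; exact (hn t ht).2
        · have := (hηlim.mul_const T).mul_const t
          simpa using this
      have h2 := h1.add_const (h0 + hd0 * t)
      simpa using h2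
    exact ⟨tendsto_nhds_unique hconvht hht, tendsto_nhds_unique hconvξt hξ0⟩
  -- bootstrap: `hl` stays above `h0/2`
  intro t ht
  have hbig : ∀ s ∈ Icc (0:ℝ) t, h0 / 2 ≤ hl s := by
    by_contra hcon
    push_neg at hcon
    obtain ⟨s₀, hs₀I, hs₀⟩ := hcon
    set S : Set ℝ := {s : ℝ | s ∈ Icc 0 t ∧ hl s < h0 / 2} with hSdef
    have hSne : S.Nonempty := ⟨s₀, hs₀I, hs₀⟩
    have hSbd : BddBelow S := ⟨0, fun s hs => hs.1.1⟩
    set σ := sInf S with hσdef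
    have hσ0 : 0 ≤ σ := le_csInf hSne fun s hs => hs.1.1
    have hσt : σ ≤ t := le_trans (csInf_le hSbd ⟨hs₀I, hs₀⟩) hs₀I.2
    have hlo : ∀ s ∈ Ico (0:ℝ) σ, h0 / 2 ≤ hl s := by
      intro s hs
      by_contra h'
      push_neg at h'
      have hsS : σ ≤ s := csInf_le hSbd ⟨⟨hs.1, le_trans hs.2.le hσt⟩, h'⟩
      exact absurd hsS (not_le.2 hs.2)
    have hσup : h0 / 2 ≤ hl σ := by
      rcases eq_or_lt_of_le hσ0 with heqz | hlt
      · rw [← heqz, hl0]; linarith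
      · have hC : IsClosed (Icc (0:ℝ) σ ∩ hl ⁻¹' Ici (h0 / 2)) :=
          ((hlcont t).mono (Icc_subset_Icc_right hσt)).preimage_isClosed_of_isClosed
            isClosed_Icc isClosed_Ici
        have hsub2 : closure (Ico (0:ℝ) σ) ⊆ Icc (0:ℝ) σ ∩ hl ⁻¹' Ici (h0 / 2) :=
          hC.closure_subset_iff.2 (fun s hs => ⟨⟨hs.1, hs.2.le⟩, hlo s hs⟩)
        have hmem : σ ∈ closure (Ico (0:ℝ) σ) := by
          rw [closure_Ico (ne_of_lt hlt)]
          exact right_mem_Icc.2 hσ0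
        exact (hsub2 hmem).2
    have hbig' : ∀ s ∈ Icc (0:ℝ) σ, h0 / 2 ≤ hl s := by
      intro s hs
      rcases lt_or_eq_of_le hs.2 with h' | h'
      · exact hlo s ⟨hs.1, h'⟩
      · rw [h']; exact hσup
    have hkey := key σ hσ0 hbig' σ (right_mem_Icc.2 hσ0)
    have h1 : h0 ≤ hl σ := by rw [hkey.1]; nlinarith
    have h2 : hl σ ≤ h0 / 2 := by
      have hC2 : IsClosed (Icc (0:ℝ) t ∩ hl ⁻¹' Iic (h0 / 2)) :=
        (hlcont t).preimage_isClosed_of_isClosed isClosed_Icc isClosed_Iic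
      have hsub : S ⊆ Icc (0:ℝ) t ∩ hl ⁻¹' Iic (h0 / 2) := fun s hs => ⟨hs.1, hs.2.le⟩
      have hσcl : σ ∈ closure S := csInf_mem_closure hSne hSbd
      exact (hC2.closure_subset_iff.2 hsub hσcl).2
    linarith
  exact key t ht hbig t (right_mem_Icc.2 ht)
end
end

section
/- Identification of the limit before impact, case ḣ₀ < 0 (Lemma 3.6(ii)): Assume (B1), (B2), (D1), (D2), b(0) = 0, initial data ξ₀ = ξ̇₀ = 0, h₀ > 0, ḣ₀ < 0, and set t₀ := −h₀/ḣ₀. Let μ_n → 0⁺, let (h_n, ξ_n) be the corresponding global solutions of (gf), and suppose h_n → h and ξ_n → ξ uniformly on compact subsets of [0,∞). Then h(t) = h₀ + ḣ₀·t and ξ(t) = 0 for every t ∈ [0, t₀]. -/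
open Real Filter Set MeasureTheory Metric

noncomputable section

private lemma aux_gronwall4 (p q P Q p' q' P' Q' : ℝ → ℝ) (T' Kg ε : ℝ)
    (hcp : ContinuousOn p (Icc 0 T')) (hcq : ContinuousOn q (Icc 0 T'))
    (hcP : ContinuousOn P (Icc 0 T')) (hcQ : ContinuousOn Q (Icc 0 T'))
    (hdp : ∀ t ∈ Ico (0:ℝ) T', HasDerivAt p (p' t) t)
    (hdq : ∀ t ∈ Ico (0:ℝ) T', HasDerivAt q (q' t) t)
    (hdP : ∀ t ∈ Ico (0:ℝ) T', HasDerivAt P (P' t) t)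
    (hdQ : ∀ t ∈ Ico (0:ℝ) T', HasDerivAt Q (Q' t) t)
    (hz : p 0 = 0 ∧ q 0 = 0 ∧ P 0 = 0 ∧ Q 0 = 0)
    (hbd : ∀ t ∈ Ico (0:ℝ) T',
      max (max |p' t| |q' t|) (max |P' t| |Q' t|)
        ≤ Kg * (max (max |p t| |q t|) (max |P t| |Q t|)) + ε) :
    ∀ t ∈ Icc (0:ℝ) T',
      max (max |p t| |q t|) (max |P t| |Q t|) ≤ gronwallBound 0 Kg ε t := by
  have hnorm : ∀ s : ℝ, ‖((p s, q s), (P s, Q s))‖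
      = max (max |p s| |q s|) (max |P s| |Q s|) := by
    intro s; simp [Prod.norm_def, Real.norm_eq_abs]
  have hcont : ContinuousOn (fun s => ((p s, q s), (P s, Q s))) (Icc (0:ℝ) T') :=
    (hcp.prodMk hcq).prodMk (hcP.prodMk hcQ)
  have hder : ∀ t ∈ Ico (0:ℝ) T',
      HasDerivWithinAt (fun s => ((p s, q s), (P s, Q s)))
        ((fun s => ((p' s, q' s), (P' s, Q' s))) t) (Ici t) t :=
    fun t ht => (((hdp t ht).prodMk (hdq t ht)).prodMk
      ((hdP t ht).prodMk (hdQ t ht))).hasDerivWithinAt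
  have h0 : ‖((p 0, q 0), (P 0, Q 0))‖ ≤ 0 := by
    rw [hz.1, hz.2.1, hz.2.2.1, hz.2.2.2]
    simp [Prod.norm_def]
  have hmain := norm_le_gronwallBound_of_norm_deriv_right_le hcont hder h0 (fun t ht => by
    rw [hnorm]
    calc ‖((p' t, q' t), (P' t, Q' t))‖
        = max (max |p' t| |q' t|) (max |P' t| |Q' t|) := by
          simp [Prod.norm_def, Real.norm_eq_abs]
      _ ≤ _ := hbd t ht)
  intro t ht
  have h2 := hmain t ht
  rw [hnorm] at h2
  simpa [sub_zero] using h2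

open scoped Topology in
private lemma aux_b_bound (b : ℝ → ℝ) (hB1 : HypB1 b) (hb0 : b 0 = 0) (M : ℝ) :
    ∃ L : ℝ, 0 ≤ L ∧ ∀ y : ℝ, |y| ≤ M → |b y| ≤ L * |y| := by
  obtain ⟨K, u, hu, hK⟩ := hB1 0
  obtain ⟨r, hr, hball⟩ := Metric.mem_nhds_iff.1 hu
  obtain ⟨Kb, hKb⟩ := (isCompact_Icc (a := -M) (b := M)).exists_bound_of_continuousOn
    (hB1.continuous.continuousOn)
  refine ⟨max (K : ℝ) (2 * max Kb 0 / r), le_trans K.2 (le_max_left _ _), ?_⟩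
  intro y hy
  rcases le_or_gt |y| (r / 2) with hc | hc
  · have hy0 : y ∈ u := hball (by simp [Real.dist_eq]; linarith [abs_nonneg y])
    have h00 : (0:ℝ) ∈ u := hball (by simp [hr])
    have := hK.dist_le_mul y hy0 0 h00
    rw [Real.dist_eq, Real.dist_eq, hb0, sub_zero, sub_zero] at this
    calc |b y| ≤ (K : ℝ) * |y| := this
      _ ≤ max (K : ℝ) (2 * max Kb 0 / r) * |y| :=
        mul_le_mul_of_nonneg_right (le_max_left _ _) (abs_nonneg y)
  · have hmem : y ∈ Set.Icc (-M) M := by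
      constructor <;> [linarith [neg_abs_le y]; linarith [le_abs_self y]]
    have h1 : |b y| ≤ max Kb 0 := le_trans (by simpa using hKb y hmem) (le_max_left _ _)
    have h2 : 2 * max Kb 0 / r * |y| ≥ max Kb 0 := by
      rw [ge_iff_le, div_mul_eq_mul_div, le_div_iff₀ hr]
      nlinarith [le_max_right Kb 0]
    calc |b y| ≤ max Kb 0 := h1
      _ ≤ 2 * max Kb 0 / r * |y| := h2
      _ ≤ max (K : ℝ) (2 * max Kb 0 / r) * |y| :=
        mul_le_mul_of_nonneg_right (le_max_right _ _) (abs_nonneg y)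

private lemma aux_D_cont (D : ℝ → ℝ → ℝ) (hD1 : HypD1 D) :
    ∀ p : ℝ × ℝ, 0 < p.1 → ContinuousAt (fun q : ℝ × ℝ => D q.1 q.2) p := by
  intro p hp
  obtain ⟨ε, hε, L, hL⟩ := hD1 p hp
  have hopen : IsOpen {q : ℝ × ℝ | 0 < q.1} := isOpen_lt continuous_const continuous_fst
  exact hL.continuousOn.continuousAt
    (Filter.inter_mem (Metric.ball_mem_nhds p hε) (hopen.mem_nhds hp))

set_option maxHeartbeats 1000000 in
/-- Lemma 3.6(ii): identification of the vanishing-viscosity limit before impact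
for `ḣ₀ < 0`: the limit is `h(t) = h₀ + ḣ₀·t`, `ξ(t) = 0` on `[0, t₀]`,
where `t₀ = −h₀/ḣ₀`. -/
theorem limit_identification_before_impact
    (a h0 hd0 c α : ℝ) (b : ℝ → ℝ) (D : ℝ → ℝ → ℝ)
    (μseq : ℕ → ℝ) (h ξ : ℕ → ℝ → ℝ) (hl ξl : ℝ → ℝ)
    (ha : 0 < a) (hh0 : 0 < h0) (hhd0 : hd0 < 0)
    (hb0 : b 0 = 0)
    (hB1 : HypB1 b) (hB2 : HypB2 b)
    (hDpos : HypDpos D) (hD1 : HypD1 D) (hD2 : HypD2 D c α)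
    (hμpos : ∀ n, 0 < μseq n) (hμ0 : Tendsto μseq atTop (nhds 0))
    (hsol : ∀ n, IsGlobalSolution a (μseq n) b D h0 hd0 0 0 (h n) (ξ n))
    (hconvh : ∀ K : Set ℝ, IsCompact K → K ⊆ Set.Ici 0 →
      TendstoUniformlyOn (fun n t => h n t) hl atTop K)
    (hconvξ : ∀ K : Set ℝ, IsCompact K → K ⊆ Set.Ici 0 →
      TendstoUniformlyOn (fun n t => ξ n t) ξl atTop K) :
    ∀ t ∈ Set.Icc (0:ℝ) (-h0 / hd0), hl t = h0 + hd0 * t ∧ ξl t = 0 := by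

  -- ### Setup and notation
  classical
  set t₀ : ℝ := -h0 / hd0 with ht₀def
  have ht₀pos : 0 < t₀ := div_pos_iff.2 (Or.inr ⟨by linarith, hhd0⟩)
  -- unpack the solutions
  have hdiffh : ∀ n, ∀ t : ℝ, 0 ≤ t → DifferentiableAt ℝ (h n) t :=
    fun n t ht => ((hsol n).2.1 t ht).1
  have hdiffhd : ∀ n, ∀ t : ℝ, 0 ≤ t → DifferentiableAt ℝ (deriv (h n)) t :=
    fun n t ht => ((hsol n).2.1 t ht).2.1
  have hdiffξ : ∀ n, ∀ t : ℝ, 0 ≤ t → DifferentiableAt ℝ (ξ n) t :=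
    fun n t ht => ((hsol n).2.1 t ht).2.2.1
  have hdiffξd : ∀ n, ∀ t : ℝ, 0 ≤ t → DifferentiableAt ℝ (deriv (ξ n)) t :=
    fun n t ht => ((hsol n).2.1 t ht).2.2.2
  have heq2 : ∀ n, ∀ t : ℝ, 0 ≤ t →
      deriv (deriv (h n)) t = - b (ξ n t) - μseq n * D (h n t) (ξ n t) * deriv (h n) t :=
    fun n => (hsol n).2.2.2.1
  have heqξ : ∀ n, ∀ t : ℝ, 0 ≤ t →
      deriv (deriv (ξ n)) t
        = -((1 + a) * b (ξ n t)) - μseq n * D (h n t) (ξ n t) * deriv (h n) t := by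
    intro n t ht
    have h1 := (hsol n).2.2.1 t ht
    have h2 := heq2 n t ht
    linear_combination h2 - h1
  have hinit : ∀ n, h n 0 = h0 ∧ deriv (h n) 0 = hd0 ∧ ξ n 0 = 0 ∧ deriv (ξ n) 0 = 0 :=
    fun n => (hsol n).2.2.2.2
  -- continuity facts
  have hconth : ∀ n, ContinuousOn (h n) (Ici 0) :=
    fun n t ht => (hdiffh n t ht).continuousAt.continuousWithinAt
  have hconthd : ∀ n, ContinuousOn (deriv (h n)) (Ici 0) :=
    fun n t ht => (hdiffhd n t ht).continuousAt.continuousWithinAt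
  have hcontξ : ∀ n, ContinuousOn (ξ n) (Ici 0) :=
    fun n t ht => (hdiffξ n t ht).continuousAt.continuousWithinAt
  have hcontξd : ∀ n, ContinuousOn (deriv (ξ n)) (Ici 0) :=
    fun n t ht => (hdiffξd n t ht).continuousAt.continuousWithinAt
  have hIccsub : ∀ A : ℝ, Icc (0:ℝ) A ⊆ Ici 0 := fun A x hx => hx.1
  have hlcont : ∀ A : ℝ, ContinuousOn hl (Icc 0 A) := fun A =>
    (hconvh _ isCompact_Icc (hIccsub A)).continuousOn
      (Filter.Eventually.of_forall fun n => (hconth n).mono (hIccsub A)).frequently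
  have ξlcont : ∀ A : ℝ, ContinuousOn ξl (Icc 0 A) := fun A =>
    (hconvξ _ isCompact_Icc (hIccsub A)).continuousOn
      (Filter.Eventually.of_forall fun n => (hcontξ n).mono (hIccsub A)).frequently
  have hpt_h : ∀ t : ℝ, 0 ≤ t → Tendsto (fun n => h n t) atTop (nhds (hl t)) :=
    fun t ht => (hconvh (Icc 0 t) isCompact_Icc (hIccsub t)).tendsto_at ⟨ht, le_refl t⟩
  have hpt_ξ : ∀ t : ℝ, 0 ≤ t → Tendsto (fun n => ξ n t) atTop (nhds (ξl t)) :=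
    fun t ht => (hconvξ (Icc 0 t) isCompact_Icc (hIccsub t)).tendsto_at ⟨ht, le_refl t⟩
  have hl0 : hl 0 = h0 := by
    refine tendsto_nhds_unique (hpt_h 0 le_rfl) ?_
    have : (fun n => h n 0) = fun _ : ℕ => h0 := funext fun n => (hinit n).1
    rw [this]; exact tendsto_const_nhds
  have ξl0 : ξl 0 = 0 := by
    refine tendsto_nhds_unique (hpt_ξ 0 le_rfl) ?_
    have : (fun n => ξ n 0) = fun _ : ℕ => (0:ℝ) := funext fun n => (hinit n).2.2.1
    rw [this]; exact tendsto_const_nhds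
  -- ### The core Gronwall argument
  have core : ∀ δ T' : ℝ, 0 < δ → 0 < T' →
      (∀ t ∈ Icc (0:ℝ) T', δ ≤ hl t) →
      ∀ t ∈ Icc (0:ℝ) T', hl t = h0 + hd0 * t ∧ ξl t = 0 := by
    intro δ T' hδ hT' hlb
    obtain ⟨C1, hC1⟩ := isCompact_Icc.exists_bound_of_continuousOn (hlcont T')
    obtain ⟨C2, hC2⟩ := isCompact_Icc.exists_bound_of_continuousOn (ξlcont T')
    set Mh : ℝ := |C1| + δ with hMhdef
    set Mξ : ℝ := |C2| + 1 with hMξdef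
    obtain ⟨L, hL0, hLb⟩ := aux_b_bound b hB1 hb0 Mξ
    have hDcont := aux_D_cont D hD1
    have hDco : ContinuousOn (fun q : ℝ × ℝ => D q.1 q.2) (Icc (δ/2) Mh ×ˢ Icc (-Mξ) Mξ) :=
      fun q hq => (hDcont q (lt_of_lt_of_le (half_pos hδ) hq.1.1)).continuousWithinAt
    obtain ⟨MD0, hMD0⟩ := (isCompact_Icc.prod isCompact_Icc).exists_bound_of_continuousOn hDco
    set MD : ℝ := max MD0 0 with hMDdef
    have hMDnn : 0 ≤ MD := le_max_right _ _
    have hDle : ∀ x y : ℝ, δ/2 ≤ x → x ≤ Mh → |y| ≤ Mξ → |D x y| ≤ MD := by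
      intro x y h1 h2 h3
      have := hMD0 (x, y) ⟨⟨h1, h2⟩, abs_le.1 h3⟩
      exact le_trans (by simpa using this) (le_max_left _ _)
    set Kg : ℝ := 1 + (1 + a) * L + MD with hKgdef
    have hKgpos : (0:ℝ) < Kg := by nlinarith
    -- eventual estimates on h n, ξ n, μseq n
    have hev : ∀ᶠ n in atTop, (∀ t ∈ Icc (0:ℝ) T', dist (hl t) (h n t) < δ/2) ∧
        (∀ t ∈ Icc (0:ℝ) T', dist (ξl t) (ξ n t) < 1) ∧ μseq n ≤ 1 := by
      filter_upwards [Metric.tendstoUniformlyOn_iff.1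
          (hconvh _ isCompact_Icc (hIccsub T')) (δ/2) (half_pos hδ),
        Metric.tendstoUniformlyOn_iff.1
          (hconvξ _ isCompact_Icc (hIccsub T')) 1 one_pos,
        hμ0.eventually_lt_const one_pos] with n h1 h2 h3
      exact ⟨h1, h2, h3.le⟩
    -- the key Gronwall estimate
    have key : ∀ᶠ n in atTop, ∀ t ∈ Icc (0:ℝ) T',
        max (max |ξ n t| |deriv (ξ n) t|)
            (max |h n t - (h0 + hd0 * t)| |deriv (h n) t - hd0|)
          ≤ gronwallBound 0 Kg (μseq n * (MD * |hd0|)) t := by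
      filter_upwards [hev] with n hn
      obtain ⟨hnh, hnξ, hnμ⟩ := hn
      have hμn : 0 < μseq n := hμpos n
      have hhn : ∀ t ∈ Icc (0:ℝ) T', δ/2 ≤ h n t ∧ h n t ≤ Mh := by
        intro t ht
        have hd := hnh t ht
        rw [Real.dist_eq] at hd
        have habs := abs_lt.1 hd
        have hb1 := hlb t ht
        have hb2 : hl t ≤ |C1| := by
          have := hC1 t ht
          rw [Real.norm_eq_abs] at this
          exact le_trans (le_abs_self _) (le_trans this (le_abs_self C1))
        refine ⟨by linarith, ?_⟩
        rw [hMhdef]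
        linarith
      have hξn : ∀ t ∈ Icc (0:ℝ) T', |ξ n t| ≤ Mξ := by
        intro t ht
        have hd := hnξ t ht
        rw [Real.dist_eq] at hd
        have habs := abs_lt.1 hd
        have hb2 : |ξl t| ≤ |C2| := by
          have := hC2 t ht
          rw [Real.norm_eq_abs] at this
          exact le_trans this (le_abs_self C2)
        rw [hMξdef]
        have := abs_le.1 hb2
        rw [abs_le]
        constructor <;> linarith
      have hmax : ∀ t : ℝ, (0:ℝ) ≤ max (max |ξ n t| |deriv (ξ n) t|)
          (max |h n t - (h0 + hd0 * t)| |deriv (h n) t - hd0|) :=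
        fun t => le_trans (abs_nonneg _) (le_trans (le_max_left _ _) (le_max_left _ _))
      apply aux_gronwall4 (ξ n) (deriv (ξ n)) (fun s => h n s - (h0 + hd0 * s))
        (fun s => deriv (h n) s - hd0) (deriv (ξ n)) (deriv (deriv (ξ n)))
        (fun s => deriv (h n) s - hd0) (deriv (deriv (h n))) T' Kg (μseq n * (MD * |hd0|))
      · exact (hcontξ n).mono (hIccsub T')
      · exact (hcontξd n).mono (hIccsub T')
      · exact ((hconth n).mono (hIccsub T')).sub
          ((continuous_const.add (continuous_const.mul continuous_id)).continuousOn)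
      · exact ((hconthd n).mono (hIccsub T')).sub continuousOn_const
      · exact fun t ht => (hdiffξ n t ht.1).hasDerivAt
      · exact fun t ht => (hdiffξd n t ht.1).hasDerivAt
      · intro t ht
        have Hlin : HasDerivAt (fun s : ℝ => h0 + hd0 * s) hd0 t := by
          simpa using ((hasDerivAt_id t).const_mul hd0).const_add h0
        exact (hdiffh n t ht.1).hasDerivAt.sub Hlin
      · exact fun t ht => (hdiffhd n t ht.1).hasDerivAt.sub_const hd0
      · exact ⟨(hinit n).2.2.1, (hinit n).2.2.2, by rw [(hinit n).1]; ring,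
          by rw [(hinit n).2.1]; ring⟩
      · intro t ht
        beta_reduce
        have htI : t ∈ Icc (0:ℝ) T' := ⟨ht.1, ht.2.le⟩
        set F : ℝ := max (max |ξ n t| |deriv (ξ n) t|)
          (max |h n t - (h0 + hd0 * t)| |deriv (h n) t - hd0|) with hFdef
        have hF0 : (0:ℝ) ≤ F := hmax t
        have hF1 : |ξ n t| ≤ F := le_trans (le_max_left _ _) (le_max_left _ _)
        have hF2 : |deriv (ξ n) t| ≤ F := le_trans (le_max_right _ _) (le_max_left _ _)
        have hF4 : |deriv (h n) t - hd0| ≤ F := le_trans (le_max_right _ _) (le_max_right _ _)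
        have hhd : |deriv (h n) t| ≤ F + |hd0| := by
          have heq : deriv (h n) t = (deriv (h n) t - hd0) + hd0 := by ring
          rw [heq]
          exact le_trans (abs_add_le _ _) (by linarith)
        have hξb : |ξ n t| ≤ Mξ := hξn t htI
        have hbξ : |b (ξ n t)| ≤ L * F :=
          le_trans (hLb _ hξb) (mul_le_mul_of_nonneg_left hF1 hL0)
        have hDb : |D (h n t) (ξ n t)| ≤ MD :=
          hDle _ _ (hhn t htI).1 (hhn t htI).2 hξb
        have hDrag : |μseq n * D (h n t) (ξ n t) * deriv (h n) t|
            ≤ MD * F + μseq n * (MD * |hd0|) := by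
          rw [abs_mul, abs_mul, abs_of_pos hμn]
          have h1 : μseq n * |D (h n t) (ξ n t)| * |deriv (h n) t|
              ≤ μseq n * MD * (F + |hd0|) := by
            apply mul_le_mul (mul_le_mul_of_nonneg_left hDb hμn.le) hhd (abs_nonneg _)
            positivity
          nlinarith [mul_nonneg (mul_nonneg (by linarith : (0:ℝ) ≤ 1 - μseq n) hMDnn) hF0]
        have hddh : |deriv (deriv (h n)) t|
            ≤ L * F + (MD * F + μseq n * (MD * |hd0|)) := by
          rw [heq2 n t ht.1]
          have habs : |-b (ξ n t) - μseq n * D (h n t) (ξ n t) * deriv (h n) t|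
              ≤ |b (ξ n t)| + |μseq n * D (h n t) (ξ n t) * deriv (h n) t| := by
            rw [sub_eq_add_neg]
            refine le_trans (abs_add_le _ _) ?_
            rw [abs_neg, abs_neg]
          linarith
        have hddξ : |deriv (deriv (ξ n)) t|
            ≤ (1 + a) * (L * F) + (MD * F + μseq n * (MD * |hd0|)) := by
          rw [heqξ n t ht.1]
          have habs : |-((1 + a) * b (ξ n t)) - μseq n * D (h n t) (ξ n t) * deriv (h n) t|
              ≤ (1 + a) * |b (ξ n t)| + |μseq n * D (h n t) (ξ n t) * deriv (h n) t| := by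
            rw [sub_eq_add_neg]
            refine le_trans (abs_add_le _ _) ?_
            rw [abs_neg, abs_neg, abs_mul, abs_of_pos (by linarith : (0:ℝ) < 1 + a)]
          have h4 : (1 + a) * |b (ξ n t)| ≤ (1 + a) * (L * F) :=
            mul_le_mul_of_nonneg_left hbξ (by linarith)
          linarith
        have hε0 : (0:ℝ) ≤ μseq n * (MD * |hd0|) := by positivity
        have hKF : Kg * F = F + (1 + a) * (L * F) + MD * F := by
          rw [hKgdef]; ring
        have e1 : |deriv (ξ n) t| ≤ Kg * F + μseq n * (MD * |hd0|) := by
          rw [hKF]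
          nlinarith [mul_nonneg (mul_nonneg (by linarith : (0:ℝ) ≤ 1 + a) hL0) hF0,
            mul_nonneg hMDnn hF0]
        have e2 : |deriv (deriv (ξ n)) t| ≤ Kg * F + μseq n * (MD * |hd0|) := by
          rw [hKF]; linarith
        have e3 : |deriv (h n) t - hd0| ≤ Kg * F + μseq n * (MD * |hd0|) := by
          rw [hKF]
          nlinarith [mul_nonneg (mul_nonneg (by linarith : (0:ℝ) ≤ 1 + a) hL0) hF0,
            mul_nonneg hMDnn hF0]
        have e4 : |deriv (deriv (h n)) t| ≤ Kg * F + μseq n * (MD * |hd0|) := by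
          rw [hKF]
          nlinarith [mul_nonneg (mul_nonneg ha.le hL0) hF0]
        exact max_le (max_le e1 e2) (max_le e3 e4)
    -- pass to the limit
    intro t ht
    have hεlim : Tendsto (fun n => gronwallBound 0 Kg (μseq n * (MD * |hd0|)) t)
        atTop (nhds 0) := by
      have heq : ∀ n : ℕ, gronwallBound 0 Kg (μseq n * (MD * |hd0|)) t
          = μseq n * ((MD * |hd0|) * ((Real.exp (Kg * t) - 1) / Kg)) := by
        intro n
        rw [gronwallBound_of_K_ne_0 (ne_of_gt hKgpos)]
        ring
      simp only [heq]
      simpa using hμ0.mul_const ((MD * |hd0|) * ((Real.exp (Kg * t) - 1) / Kg))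
    constructor
    · refine tendsto_nhds_unique (hpt_h t ht.1) (tendsto_sub_nhds_zero_iff.1 ?_)
      apply squeeze_zero_norm' _ hεlim
      filter_upwards [key] with n hk
      rw [Real.norm_eq_abs]
      exact le_trans (le_trans (le_max_left _ _) (le_max_right _ _)) (hk t ht)
    · have hll : Tendsto (fun n => ξ n t) atTop (nhds 0) := by
        apply squeeze_zero_norm' _ hεlim
        filter_upwards [key] with n hk
        rw [Real.norm_eq_abs]
        exact le_trans (le_trans (le_max_left _ _) (le_max_left _ _)) (hk t ht)
      exact tendsto_nhds_unique (hpt_ξ t ht.1) hll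
  -- ### The continuation step
  have step : ∀ T : ℝ, 0 ≤ T → T < t₀ →
      (∀ t ∈ Icc (0:ℝ) T, hl t = h0 + hd0 * t ∧ ξl t = 0) →
      ∃ T', T < T' ∧ T' ≤ t₀ ∧ ∀ t ∈ Icc (0:ℝ) T', hl t = h0 + hd0 * t ∧ ξl t = 0 := by
    intro T hT0 hTlt hP
    have hδpos : 0 < h0 + hd0 * T := by
      have h1 : T * (-hd0) < t₀ * (-hd0) := mul_lt_mul_of_pos_right hTlt (by linarith)
      have h2 : t₀ * (-hd0) = h0 := by
        rw [ht₀def]; field_simp; exact div_self (ne_of_lt hhd0)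
      nlinarith
    set δ : ℝ := (h0 + hd0 * T) / 2 with hδdef
    have hδ2 : 0 < δ := half_pos hδpos
    have hcT : ContinuousWithinAt hl (Icc 0 t₀) T := (hlcont t₀) T ⟨hT0, hTlt.le⟩
    obtain ⟨η, hη, hball⟩ := Metric.continuousWithinAt_iff.1 hcT δ hδ2
    set T' : ℝ := min (T + η / 2) ((T + t₀) / 2) with hT'def
    have hT'1 : T < T' := lt_min (by linarith) (by linarith)
    have hT'2 : T' < t₀ := lt_of_le_of_lt (min_le_right _ _) (by linarith)
    have hlT : hl T = h0 + hd0 * T := (hP T ⟨hT0, le_rfl⟩).1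
    have hlbd : ∀ t ∈ Icc (0:ℝ) T', δ ≤ hl t := by
      intro t ht
      rcases le_or_gt t T with hc | hc
      · rw [(hP t ⟨ht.1, hc⟩).1, hδdef]
        nlinarith [mul_nonneg (by linarith : (0:ℝ) ≤ -hd0) (by linarith : (0:ℝ) ≤ T - t)]
      · have hmem : t ∈ Icc (0:ℝ) t₀ := ⟨ht.1, le_trans ht.2 hT'2.le⟩
        have hdist : dist t T < η := by
          rw [Real.dist_eq, abs_of_nonneg (by linarith)]
          have := le_trans ht.2 (min_le_left _ _)
          linarith
        have hcl := hball hmem hdist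
        rw [Real.dist_eq, hlT] at hcl
        have := abs_lt.1 hcl
        rw [hδdef] at *
        linarith
    exact ⟨T', hT'1, hT'2.le, core δ T' hδ2 (lt_of_le_of_lt hT0 hT'1) hlbd⟩
  -- ### Bootstrap by taking the supremum
  set S : Set ℝ := {T | T ∈ Icc (0:ℝ) t₀ ∧
    ∀ t ∈ Icc (0:ℝ) T, hl t = h0 + hd0 * t ∧ ξl t = 0} with hSdef
  have h0S : (0:ℝ) ∈ S := by
    refine ⟨⟨le_rfl, ht₀pos.le⟩, ?_⟩
    intro t ht
    have : t = 0 := le_antisymm ht.2 ht.1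
    subst this
    exact ⟨by rw [hl0]; ring, ξl0⟩
  have hSne : S.Nonempty := ⟨0, h0S⟩
  have hbdd : BddAbove S := ⟨t₀, fun x hx => hx.1.2⟩
  set s := sSup S with hsdef
  have hsmem : s ∈ Icc (0:ℝ) t₀ := ⟨le_csSup hbdd h0S, csSup_le hSne (fun x hx => hx.1.2)⟩
  have hPlt : ∀ u : ℝ, 0 ≤ u → u < s → hl u = h0 + hd0 * u ∧ ξl u = 0 := by
    intro u hu0 hus
    obtain ⟨T, hTS, hTlt⟩ := exists_lt_of_lt_csSup hSne hus
    exact hTS.2 u ⟨hu0, hTlt.le⟩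
  have hPend : hl s = h0 + hd0 * s ∧ ξl s = 0 := by
    rcases eq_or_lt_of_le hsmem.1 with h0eq | h0lt
    · rw [← h0eq]
      exact ⟨by rw [hl0]; ring, ξl0⟩
    · have hne : (nhdsWithin s (Ico 0 s)).NeBot := by
        rw [nhdsWithin_Ico_eq_nhdsLT h0lt]
        infer_instance
      have hsub : Ico (0:ℝ) s ⊆ Icc 0 t₀ := fun u hu => ⟨hu.1, le_trans hu.2.le hsmem.2⟩
      have hlc : Tendsto hl (nhdsWithin s (Ico 0 s)) (nhds (hl s)) :=
        ((hlcont t₀) s ⟨hsmem.1, hsmem.2⟩).mono_left (nhdsWithin_mono s hsub)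
      have ξlc : Tendsto ξl (nhdsWithin s (Ico 0 s)) (nhds (ξl s)) :=
        ((ξlcont t₀) s ⟨hsmem.1, hsmem.2⟩).mono_left (nhdsWithin_mono s hsub)
      have hmemev : ∀ᶠ u in nhdsWithin s (Ico 0 s), u ∈ Ico (0:ℝ) s :=
        eventually_mem_nhdsWithin
      have hlc2 : Tendsto hl (nhdsWithin s (Ico 0 s)) (nhds (h0 + hd0 * s)) := by
        have hlin : Tendsto (fun u : ℝ => h0 + hd0 * u) (nhdsWithin s (Ico 0 s))
            (nhds (h0 + hd0 * s)) := by
          apply Tendsto.mono_left _ nhdsWithin_le_nhds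
          exact (continuous_const.add (continuous_const.mul continuous_id)).tendsto s
        apply hlin.congr'
        filter_upwards [hmemev] with u hu
        exact ((hPlt u hu.1 hu.2).1).symm
      have ξlc2 : Tendsto ξl (nhdsWithin s (Ico 0 s)) (nhds 0) := by
        apply tendsto_const_nhds.congr'
        filter_upwards [hmemev] with u hu
        exact ((hPlt u hu.1 hu.2).2).symm
      exact ⟨tendsto_nhds_unique hlc hlc2, tendsto_nhds_unique ξlc ξlc2⟩
  have hPfull : ∀ t ∈ Icc (0:ℝ) s, hl t = h0 + hd0 * t ∧ ξl t = 0 := by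
    intro t ht
    rcases lt_or_eq_of_le ht.2 with hlt | heq
    · exact hPlt t ht.1 hlt
    · rw [heq]; exact hPend
  have hseq : s = t₀ := by
    by_contra hne
    have hlt : s < t₀ := lt_of_le_of_ne hsmem.2 hne
    obtain ⟨T', hT'1, hT'2, hPT'⟩ := step s hsmem.1 hlt hPfull
    have : T' ≤ s := le_csSup hbdd ⟨⟨le_trans hsmem.1 hT'1.le, hT'2⟩, hPT'⟩
    linarith
  intro t ht
  rw [← hseq] at ht
  exact hPfull t ht
end
end

section
/- Vanishing viscosity limit for nonnegative initial velocity (Theorem 3.2(ii)): Assume (B1), (B2), (D1), (D2) and b(0) = 0. Take initial data ξ₀ = ξ̇₀ = 0, h₀ > 0, ḣ₀ ≥ 0, and set H(t) := max{0, h₀ + ḣ₀·t} = h₀ + ḣ₀·t. For μ > 0 let (h_μ, ξ_μ) denote the unique global solution of (gf). Then, as μ → 0⁺, h_μ → H and ξ_μ → 0 uniformly on every compact subset of [0,∞). -/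
open Real Filter Set MeasureTheory Metric
open Topology

noncomputable section

set_option maxHeartbeats 8000000 in
/-- Theorem 3.2(ii): for `ḣ₀ ≥ 0`, as `μ → 0⁺`, `h_μ → H` with
`H(t) = max{0, h₀ + ḣ₀ t} = h₀ + ḣ₀ t` and `ξ_μ → 0`, uniformly on every
compact subset of `[0,∞)`. -/
theorem vanishing_viscosity_nonneg_velocity
    (a h0 hd0 c α : ℝ) (b : ℝ → ℝ) (D : ℝ → ℝ → ℝ)
    (h ξ : ℝ → ℝ → ℝ)
    (ha : 0 < a) (hh0 : 0 < h0) (hhd0 : 0 ≤ hd0)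
    (hb0 : b 0 = 0)
    (hB1 : HypB1 b) (hB2 : HypB2 b)
    (hDpos : HypDpos D) (hD1 : HypD1 D) (hD2 : HypD2 D c α)
    (hsol : ∀ μ : ℝ, 0 < μ →
      IsGlobalSolution a μ b D h0 hd0 0 0 (h μ) (ξ μ)) :
    ∀ K : Set ℝ, IsCompact K → K ⊆ Set.Ici 0 →
      TendstoUniformlyOn (fun μ t => h μ t) (fun t => max 0 (h0 + hd0 * t))
        (nhdsWithin 0 (Set.Ioi 0)) K ∧
      TendstoUniformlyOn (fun μ t => ξ μ t) (fun _ => 0)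
        (nhdsWithin 0 (Set.Ioi 0)) K := by
  intro K hKc hK0
  -- a time horizon T ≥ 1 containing K
  obtain ⟨T₀, hT₀⟩ := hKc.bddAbove
  set T : ℝ := max 1 T₀ with hTdef
  have hT1 : (1:ℝ) ≤ T := le_max_left _ _
  have hT : (0:ℝ) < T := lt_of_lt_of_le one_pos hT1
  have hKT : ∀ t ∈ K, t ∈ Icc (0:ℝ) T := fun t ht =>
    ⟨hK0 ht, le_trans (hT₀ ht) (le_max_right _ _)⟩
  -- Lipschitz bound for b near 0
  obtain ⟨Kb, U, hU, hLipb⟩ := hB1 0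
  obtain ⟨r, hr, hball⟩ := Metric.mem_nhds_iff.1 hU
  set Lb : ℝ := (Kb : ℝ) with hLbdef
  have hLb0 : 0 ≤ Lb := Kb.coe_nonneg
  have hbb : ∀ y : ℝ, |y| ≤ r/2 → |b y| ≤ Lb * |y| := by
    intro y hy
    have hy' : y ∈ U := hball (by
      simp only [Metric.mem_ball, Real.dist_eq, sub_zero]
      exact lt_of_le_of_lt hy (by linarith))
    have h0' : (0:ℝ) ∈ U := hball (by simp [Metric.mem_ball, hr])
    have := hLipb.dist_le_mul y hy' 0 h0'
    simpa [Real.dist_eq, hb0] using this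
  -- a small parameter ε₀
  set ε₀ : ℝ := min (min (r/2) 1) (h0/(2*(T+1))) with hε₀def
  have hε₀pos : 0 < ε₀ :=
    lt_min (lt_min (by linarith) one_pos) (by positivity)
  have hε₀r : ε₀ ≤ r/2 := le_trans (min_le_left _ _) (min_le_left _ _)
  have hε₀1 : ε₀ ≤ 1 := le_trans (min_le_left _ _) (min_le_right _ _)
  have hε₀T : ε₀ * T ≤ h0/2 := by
    have h1 : ε₀ ≤ h0/(2*(T+1)) := min_le_right _ _
    have h2 : ε₀ * T ≤ (h0/(2*(T+1))) * T :=
      mul_le_mul_of_nonneg_right h1 (le_of_lt hT)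
    have h3 : (h0/(2*(T+1))) * T ≤ h0/2 := by
      rw [div_mul_eq_mul_div, div_le_div_iff₀ (by positivity) (by norm_num)]
      nlinarith
    linarith
  -- continuity of D and a bound on a compact rectangle
  have hDcont : ∀ p : ℝ × ℝ, 0 < p.1 →
      ContinuousAt (fun q : ℝ × ℝ => D q.1 q.2) p := by
    intro p hp
    obtain ⟨ε, hε, L, hL⟩ := hD1 p hp
    have hopen : IsOpen {q : ℝ × ℝ | 0 < q.1} :=
      isOpen_lt continuous_const continuous_fst
    have hmem : Metric.ball p ε ∩ {q : ℝ × ℝ | 0 < q.1} ∈ 𝓝 p :=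
      inter_mem (Metric.ball_mem_nhds p hε) (hopen.mem_nhds hp)
    exact hL.continuousOn.continuousAt hmem
  set Hi : ℝ := h0 + (hd0+1)*T with hHidef
  have hHi : h0/2 ≤ Hi := by nlinarith
  have hRc : IsCompact (Icc (h0/2) Hi ×ˢ Icc (-1:ℝ) 1) :=
    isCompact_Icc.prod isCompact_Icc
  have hRne : (Icc (h0/2) Hi ×ˢ Icc (-1:ℝ) 1).Nonempty :=
    ⟨(h0/2, 0), ⟨le_refl _, hHi⟩, by norm_num⟩
  have hRpos : ∀ p ∈ Icc (h0/2) Hi ×ˢ Icc (-1:ℝ) 1, (0:ℝ) < p.1 :=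
    fun p hp => lt_of_lt_of_le (half_pos hh0) hp.1.1
  obtain ⟨pm, hpm, hpmax⟩ := hRc.exists_isMaxOn hRne
    (fun p hp => (hDcont p (hRpos p hp)).continuousWithinAt)
  set Dmax : ℝ := D pm.1 pm.2 with hDmaxdef
  have hDmaxpos : 0 < Dmax := hDpos _ _ (hRpos pm hpm)
  have hDb : ∀ x y : ℝ, x ∈ Icc (h0/2) Hi → y ∈ Icc (-1:ℝ) 1 → D x y ≤ Dmax :=
    fun x y hx hy => hpmax (Set.mk_mem_prod hx hy)
  -- the constants
  set M : ℝ := hd0 + 1 with hMdef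
  have hM0 : 0 < M := by linarith
  set C₁ : ℝ := Dmax * M with hC₁def
  have hC₁0 : 0 ≤ C₁ := by positivity
  set Kg : ℝ := 1 + (1+a)*Lb with hKgdef
  have hKg1 : 1 ≤ Kg := by nlinarith
  have hKg0 : 0 < Kg := by linarith
  set C₂ : ℝ := C₁/Kg * Real.exp (Kg*T) with hC₂def
  have hC₂0 : 0 ≤ C₂ := by positivity
  set C₃ : ℝ := (Lb*C₂ + C₁)*T with hC₃def
  have hC₃0 : 0 ≤ C₃ := by positivity
  set C₄ : ℝ := C₃*T with hC₄def
  have hC₄0 : 0 ≤ C₄ := by positivity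
  set μ₀ : ℝ := ε₀/(2*(C₂+C₃+1)) with hμ₀def
  have hμ₀pos : 0 < μ₀ := by positivity
  -- MAIN quantitative estimate
  have main : ∀ μ : ℝ, 0 < μ → μ ≤ μ₀ → ∀ t ∈ Icc (0:ℝ) T,
      |ξ μ t| ≤ μ*C₂ ∧ |h μ t - (h0 + hd0*t)| ≤ μ*C₄ := by
    intro μ hμ hμle
    obtain ⟨hpos, hdiff, heq1, heq2, hih, hih', hiξ, hiξ'⟩ := hsol μ hμ
    have hξ'' : ∀ s : ℝ, 0 ≤ s → deriv (deriv (ξ μ)) s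
        = -(1+a)*b (ξ μ s) - μ * D (h μ s) (ξ μ s) * deriv (h μ) s := by
      intro s hs
      have e1 := heq1 s hs
      have e2 := heq2 s hs
      linear_combination e2 - e1
    set g1 : ℝ → ℝ × ℝ := fun s => (ξ μ s, deriv (ξ μ) s) with hg1def
    set g1' : ℝ → ℝ × ℝ := fun s => (deriv (ξ μ) s, deriv (deriv (ξ μ)) s)
      with hg1'def
    have hg1d : ∀ s : ℝ, 0 ≤ s → HasDerivAt g1 (g1' s) s := fun s hs =>
      ((hdiff s hs).2.2.1.hasDerivAt).prodMk ((hdiff s hs).2.2.2.hasDerivAt)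
    have hg1c : ∀ s : ℝ, 0 ≤ s → ContinuousAt g1 s := fun s hs =>
      (hg1d s hs).continuousAt
    have hhdc : ∀ s : ℝ, 0 ≤ s → ContinuousAt (deriv (h μ)) s := fun s hs =>
      (hdiff s hs).2.1.continuousAt
    -- derivative facts for h-related Gronwalls
    have hhaff : ∀ s : ℝ, 0 ≤ s →
        HasDerivAt (fun u => h μ u - (h0 + hd0*u)) (deriv (h μ) s - hd0) s := by
      intro s hs
      have h1 : HasDerivAt (fun u : ℝ => h0 + hd0*u) hd0 s := by
        simpa using ((hasDerivAt_id s).const_mul hd0).const_add h0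
      exact (hdiff s hs).1.hasDerivAt.sub h1
    have hhd : ∀ s : ℝ, 0 ≤ s →
        HasDerivAt (fun u => deriv (h μ) u - hd0) (deriv (deriv (h μ)) s) s :=
      fun s hs => ((hdiff s hs).2.1.hasDerivAt).sub_const hd0
    -- the bootstrap condition
    set cond : ℝ → Prop :=
      fun s => ‖g1 s‖ ≤ ε₀ ∧ |deriv (h μ) s - hd0| ≤ ε₀ with hconddef
    -- Step 1 : cond on [0,t] gives rough bounds for h
    have hstep1 : ∀ t ∈ Icc (0:ℝ) T, (∀ s ∈ Icc (0:ℝ) t, cond s) →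
        ∀ s ∈ Icc (0:ℝ) t, |h μ s - (h0 + hd0*s)| ≤ ε₀ * s := by
      intro t ht hc s hs
      have hGr := norm_le_gronwallBound_of_norm_deriv_right_le
        (f := fun u => h μ u - (h0 + hd0*u))
        (f' := fun u => deriv (h μ) u - hd0) (δ := 0) (K := 0) (ε := ε₀)
        (a := 0) (b := t)
        (fun u hu => ((hhaff u hu.1).continuousAt).continuousWithinAt)
        (fun u hu => (hhaff u hu.1).hasDerivWithinAt)
        (by simp [hih])
        (fun u hu => by
          have := (hc u ⟨hu.1, le_of_lt hu.2⟩).2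
          simpa [Real.norm_eq_abs] using this)
        s hs
      simpa [Real.norm_eq_abs, gronwallBound_K0] using hGr
    -- Step 2 : cond on [0,t] gives range bounds for h and h'
    have hstep2 : ∀ t ∈ Icc (0:ℝ) T, (∀ s ∈ Icc (0:ℝ) t, cond s) →
        ∀ s ∈ Icc (0:ℝ) t,
          h μ s ∈ Icc (h0/2) Hi ∧ |deriv (h μ) s| ≤ M := by
      intro t ht hc s hs
      have h1 := hstep1 t ht hc s hs
      have hsT : s ≤ T := le_trans hs.2 ht.2
      have habs := abs_le.1 h1
      have hεs : ε₀ * s ≤ h0/2 :=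
        le_trans (mul_le_mul_of_nonneg_left hsT (le_of_lt hε₀pos)) hε₀T
      have habs2 := abs_le.1 (hc s hs).2
      constructor
      · constructor
        · nlinarith [mul_nonneg hhd0 hs.1]
        · rw [hHidef]
          nlinarith [mul_le_mul_of_nonneg_left hsT hhd0,
            mul_le_mul_of_nonneg_left hsT (le_of_lt hε₀pos),
            mul_le_mul_of_nonneg_right hε₀1 (le_of_lt hT)]
      · rw [abs_le]
        constructor <;> [nlinarith; nlinarith]
    -- Step 3 : improvement
    have himprove : ∀ t ∈ Icc (0:ℝ) T, (∀ s ∈ Icc (0:ℝ) t, cond s) →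
        ∀ s ∈ Icc (0:ℝ) t, ‖g1 s‖ ≤ μ*C₂ ∧ |deriv (h μ) s - hd0| ≤ μ*C₃ ∧
          |h μ s - (h0 + hd0*s)| ≤ μ*C₄ := by
      intro t ht hc
      -- the ξ''-bound under cond
      have hxibound : ∀ s ∈ Icc (0:ℝ) t,
          |deriv (deriv (ξ μ)) s| ≤ (1+a)*Lb*|ξ μ s| + μ*C₁ := by
        intro s hs
        have hR := hstep2 t ht hc s hs
        have hcnd := hc s hs
        have hxi : |ξ μ s| ≤ ε₀ := by
          refine le_trans ?_ hcnd.1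
          rw [hg1def, Prod.norm_def]
          exact le_trans (le_of_eq (Real.norm_eq_abs _).symm) (le_max_left _ _)
        have hxir : |ξ μ s| ≤ r/2 := le_trans hxi hε₀r
        have hb1 : |b (ξ μ s)| ≤ Lb * |ξ μ s| := hbb _ hxir
        have hxi1 : ξ μ s ∈ Icc (-1:ℝ) 1 := abs_le.1 (le_trans hxi hε₀1)
        have hD1' : D (h μ s) (ξ μ s) ≤ Dmax := hDb _ _ hR.1 hxi1
        have hD0' : 0 ≤ D (h μ s) (ξ μ s) :=
          le_of_lt (hDpos _ _ (lt_of_lt_of_le (half_pos hh0) hR.1.1))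
        rw [hξ'' s hs.1]
        have : |(-(1+a)*b (ξ μ s) - μ * D (h μ s) (ξ μ s) * deriv (h μ) s)|
            ≤ (1+a)*|b (ξ μ s)| + μ * D (h μ s) (ξ μ s) * |deriv (h μ) s| := by
          calc |(-(1+a)*b (ξ μ s) - μ * D (h μ s) (ξ μ s) * deriv (h μ) s)|
              ≤ |(-(1+a)*b (ξ μ s))| + |μ * D (h μ s) (ξ μ s) * deriv (h μ) s| :=
                abs_sub _ _
            _ = (1+a)*|b (ξ μ s)| + μ * D (h μ s) (ξ μ s) * |deriv (h μ) s| := by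
                rw [abs_mul, abs_mul, abs_mul, abs_neg, abs_of_pos hμ,
                  abs_of_nonneg hD0', abs_of_pos (show (0:ℝ) < 1+a by linarith)]
        refine le_trans this ?_
        have h2 : μ * D (h μ s) (ξ μ s) * |deriv (h μ) s| ≤ μ * C₁ := by
          rw [hC₁def]
          have := mul_le_mul hD1' hR.2 (abs_nonneg _) (le_of_lt hDmaxpos)
          nlinarith
        nlinarith [mul_le_mul_of_nonneg_left hb1 (show (0:ℝ) ≤ 1+a by linarith)]
      -- Gronwall for g1
      have gw1 : ∀ s ∈ Icc (0:ℝ) t, ‖g1 s‖ ≤ μ*C₂ := by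
        intro s hs
        have hGr := norm_le_gronwallBound_of_norm_deriv_right_le
          (f := g1) (f' := g1') (δ := 0) (K := Kg) (ε := μ*C₁)
          (a := 0) (b := t)
          (fun u hu => (hg1c u hu.1).continuousWithinAt)
          (fun u hu => (hg1d u hu.1).hasDerivWithinAt)
          (by simp [hg1def, hiξ, hiξ', Prod.norm_def])
          (fun u hu => by
            have hu' : u ∈ Icc (0:ℝ) t := ⟨hu.1, le_of_lt hu.2⟩
            have h1 := hxibound u hu'
            have hxi : |ξ μ u| ≤ ‖g1 u‖ := by
              rw [hg1def, Prod.norm_def]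
              exact le_trans (le_of_eq (Real.norm_eq_abs _).symm) (le_max_left _ _)
            have hxid : |deriv (ξ μ) u| ≤ ‖g1 u‖ := by
              rw [hg1def, Prod.norm_def]
              exact le_trans (le_of_eq (Real.norm_eq_abs _).symm) (le_max_right _ _)
            have hn : ‖g1' u‖ = max |deriv (ξ μ) u| |deriv (deriv (ξ μ)) u| := by
              rw [hg1'def, Prod.norm_def]; rfl
            rw [hn]
            apply max_le
            · have h0g : 0 ≤ ‖g1 u‖ := norm_nonneg _
              nlinarith [mul_nonneg (le_of_lt hμ) hC₁0,
                mul_le_mul_of_nonneg_right hKg1 h0g]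
            · refine le_trans h1 ?_
              have h0g : 0 ≤ ‖g1 u‖ := norm_nonneg _
              nlinarith [mul_le_mul_of_nonneg_left hxi
                (mul_nonneg (show (0:ℝ) ≤ 1+a by linarith) hLb0)])
          s hs
        refine le_trans hGr ?_
        rw [gronwallBound_of_K_ne_0 (ne_of_gt hKg0)]
        have hsT : s - 0 ≤ T := by
          have := le_trans hs.2 ht.2; linarith
        have he1 : Real.exp (Kg*(s-0)) - 1 ≤ Real.exp (Kg*T) := by
          have := Real.exp_le_exp.2 (mul_le_mul_of_nonneg_left hsT (le_of_lt hKg0))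
          linarith
        have h2 : (0:ℝ) ≤ μ*C₁/Kg := by positivity
        calc (0:ℝ)*Real.exp (Kg*(s-0)) + μ*C₁/Kg*(Real.exp (Kg*(s-0)) - 1)
            = μ*C₁/Kg*(Real.exp (Kg*(s-0)) - 1) := by ring
          _ ≤ μ*C₁/Kg*Real.exp (Kg*T) := mul_le_mul_of_nonneg_left he1 h2
          _ = μ*C₂ := by rw [hC₂def]; ring
      -- Gronwall for h'
      have gw2 : ∀ s ∈ Icc (0:ℝ) t, |deriv (h μ) s - hd0| ≤ μ*C₃ := by
        intro s hs
        have hGr := norm_le_gronwallBound_of_norm_deriv_right_le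
          (f := fun u => deriv (h μ) u - hd0)
          (f' := fun u => deriv (deriv (h μ)) u) (δ := 0) (K := 0)
          (ε := μ*(Lb*C₂ + C₁)) (a := 0) (b := t)
          (fun u hu => ((hhd u hu.1).continuousAt).continuousWithinAt)
          (fun u hu => (hhd u hu.1).hasDerivWithinAt)
          (by simp [hih'])
          (fun u hu => by
            have hu' : u ∈ Icc (0:ℝ) t := ⟨hu.1, le_of_lt hu.2⟩
            have hR := hstep2 t ht hc u hu'
            have hg := gw1 u hu'
            have hxi : |ξ μ u| ≤ μ*C₂ := by
              refine le_trans ?_ hg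
              rw [hg1def, Prod.norm_def]
              exact le_trans (le_of_eq (Real.norm_eq_abs _).symm) (le_max_left _ _)
            have hcnd := hc u hu'
            have hxiε : |ξ μ u| ≤ ε₀ := le_trans (by
              rw [hg1def, Prod.norm_def]
              exact le_trans (le_of_eq (Real.norm_eq_abs _).symm)
                (le_max_left _ _)) hcnd.1
            have hxir : |ξ μ u| ≤ r/2 := le_trans hxiε hε₀r
            have hb1 : |b (ξ μ u)| ≤ Lb * |ξ μ u| := hbb _ hxir
            have hxi1 : ξ μ u ∈ Icc (-1:ℝ) 1 := abs_le.1 (le_trans hxiε hε₀1)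
            have hD1' : D (h μ u) (ξ μ u) ≤ Dmax := hDb _ _ hR.1 hxi1
            have hD0' : 0 ≤ D (h μ u) (ξ μ u) :=
              le_of_lt (hDpos _ _ (lt_of_lt_of_le (half_pos hh0) hR.1.1))
            show ‖deriv (deriv (h μ)) u‖ ≤
              0 * ‖deriv (h μ) u - hd0‖ + μ*(Lb*C₂ + C₁)
            rw [heq2 u hu'.1, Real.norm_eq_abs]
            have habs : |(- b (ξ μ u) - μ * D (h μ u) (ξ μ u) * deriv (h μ) u)|
                ≤ |b (ξ μ u)| + μ * D (h μ u) (ξ μ u) * |deriv (h μ) u| := by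
              calc |(- b (ξ μ u) - μ * D (h μ u) (ξ μ u) * deriv (h μ) u)|
                  ≤ |(- b (ξ μ u))| + |μ * D (h μ u) (ξ μ u) * deriv (h μ) u| :=
                    abs_sub _ _
                _ = |b (ξ μ u)| + μ * D (h μ u) (ξ μ u) * |deriv (h μ) u| := by
                    rw [abs_neg, abs_mul, abs_mul, abs_of_pos hμ,
                      abs_of_nonneg hD0']
            refine le_trans habs ?_
            have h2 : μ * D (h μ u) (ξ μ u) * |deriv (h μ) u| ≤ μ * C₁ := by
              have hDM := mul_le_mul hD1' hR.2 (abs_nonneg _) (le_of_lt hDmaxpos)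
              rw [hC₁def]
              calc μ * D (h μ u) (ξ μ u) * |deriv (h μ) u|
                  = μ * (D (h μ u) (ξ μ u) * |deriv (h μ) u|) := by ring
                _ ≤ μ * (Dmax * M) := mul_le_mul_of_nonneg_left hDM (le_of_lt hμ)
            have h3 : |b (ξ μ u)| ≤ Lb * (μ*C₂) :=
              le_trans hb1 (mul_le_mul_of_nonneg_left hxi hLb0)
            have h0n : (0:ℝ) ≤ |deriv (h μ) u - hd0| := abs_nonneg _
            linarith)
          s hs
        have hsT : s ≤ T := le_trans hs.2 ht.2
        have := hGr
        rw [gronwallBound_K0] at this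
        simp only [Real.norm_eq_abs] at this
        calc |deriv (h μ) s - hd0| ≤ 0 + μ*(Lb*C₂ + C₁)*(s - 0) := this
          _ ≤ μ*C₃ := by
              rw [hC₃def]
              have := mul_le_mul_of_nonneg_left hsT
                (mul_nonneg (le_of_lt hμ)
                  (add_nonneg (mul_nonneg hLb0 hC₂0) hC₁0))
              linarith
      -- Gronwall for h
      have gw3 : ∀ s ∈ Icc (0:ℝ) t, |h μ s - (h0 + hd0*s)| ≤ μ*C₄ := by
        intro s hs
        have hGr := norm_le_gronwallBound_of_norm_deriv_right_le
          (f := fun u => h μ u - (h0 + hd0*u))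
          (f' := fun u => deriv (h μ) u - hd0) (δ := 0) (K := 0)
          (ε := μ*C₃) (a := 0) (b := t)
          (fun u hu => ((hhaff u hu.1).continuousAt).continuousWithinAt)
          (fun u hu => (hhaff u hu.1).hasDerivWithinAt)
          (by simp [hih])
          (fun u hu => by
            have := gw2 u ⟨hu.1, le_of_lt hu.2⟩
            simpa [Real.norm_eq_abs] using this)
          s hs
        have hsT : s ≤ T := le_trans hs.2 ht.2
        rw [gronwallBound_K0] at hGr
        simp only [Real.norm_eq_abs] at hGr
        calc |h μ s - (h0 + hd0*s)| ≤ 0 + μ*C₃*(s - 0) := hGr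
          _ ≤ μ*C₄ := by
              rw [hC₄def]
              have := mul_le_mul_of_nonneg_left hsT
                (mul_nonneg (le_of_lt hμ) hC₃0)
              linarith
      exact fun s hs => ⟨gw1 s hs, gw2 s hs, gw3 s hs⟩
    -- Step 4 : the continuation argument, cond holds on all of [0,T]
    have hsmall2 : μ*C₂ ≤ ε₀/2 := by
      have : μ*C₂ ≤ μ₀*(C₂+C₃+1) := by nlinarith
      rw [hμ₀def] at this
      calc μ*C₂ ≤ ε₀/(2*(C₂+C₃+1))*(C₂+C₃+1) := this
        _ = ε₀/2 := by field_simp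
    have hsmall3 : μ*C₃ ≤ ε₀/2 := by
      have : μ*C₃ ≤ μ₀*(C₂+C₃+1) := by nlinarith
      rw [hμ₀def] at this
      calc μ*C₃ ≤ ε₀/(2*(C₂+C₃+1))*(C₂+C₃+1) := this
        _ = ε₀/2 := by field_simp
    have hall : ∀ s ∈ Icc (0:ℝ) T, cond s := by
      set S : Set ℝ := {t | t ∈ Icc (0:ℝ) T ∧ ∀ s ∈ Icc (0:ℝ) t, cond s}
        with hSdef
      have h0S : (0:ℝ) ∈ S := by
        refine ⟨⟨le_refl _, le_of_lt hT⟩, ?_⟩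
        intro s hs
        have hs0 : s = 0 := le_antisymm hs.2 hs.1
        subst hs0
        constructor
        · simp [hg1def, hiξ, hiξ', Prod.norm_def]
          exact le_of_lt hε₀pos
        · simp [hih']
          exact le_of_lt hε₀pos
      have hSne : S.Nonempty := ⟨0, h0S⟩
      have hbdd : BddAbove S := ⟨T, fun x hx => hx.1.2⟩
      set t₀ : ℝ := sSup S with ht₀def
      have ht₀Icc : t₀ ∈ Icc (0:ℝ) T :=
        ⟨le_csSup hbdd h0S, csSup_le hSne (fun x hx => hx.1.2)⟩
      have hlt : ∀ s : ℝ, 0 ≤ s → s < t₀ → cond s := by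
        intro s hs0 hst
        obtain ⟨u, huS, hsu⟩ := exists_lt_of_lt_csSup hSne hst
        exact huS.2 s ⟨hs0, le_of_lt hsu⟩
      have ht₀S : t₀ ∈ S := by
        refine ⟨ht₀Icc, ?_⟩
        intro s hs
        rcases lt_or_eq_of_le hs.2 with hc | hc
        · exact hlt s hs.1 hc
        · have hlt' : ∀ u : ℝ, 0 ≤ u → u < s → cond u :=
            fun u h1 h2 => hlt u h1 (hc ▸ h2)
          rcases eq_or_lt_of_le hs.1 with hc0 | hc0
          · exact hc0 ▸ h0S.2 0 ⟨le_refl _, le_refl _⟩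
          · -- s = t₀ > 0 : take limits from the left
            have hne : (Ico (0:ℝ) s).Nonempty := ⟨0, le_refl _, hc0⟩
            have hclos : s ∈ closure (Ico (0:ℝ) s) := by
              rw [closure_Ico (ne_of_lt hc0)]
              exact ⟨hs.1, le_refl _⟩
            have hnb : (𝓝[Ico (0:ℝ) s] s).NeBot :=
              mem_closure_iff_nhdsWithin_neBot.1 hclos
            constructor
            · refine le_of_tendsto (((continuous_norm.continuousAt).comp
                (hg1c s hs.1)).continuousWithinAt :
                  Tendsto (fun u => ‖g1 u‖) (𝓝[Ico (0:ℝ) s] s) (𝓝 ‖g1 s‖)) ?_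
              exact eventually_nhdsWithin_of_forall
                (fun u hu => (hlt' u hu.1 hu.2).1)
            · refine le_of_tendsto (((continuous_abs.continuousAt).comp
                ((hhdc s hs.1).sub continuousAt_const)).continuousWithinAt :
                  Tendsto (fun u => |deriv (h μ) u - hd0|) (𝓝[Ico (0:ℝ) s] s)
                    (𝓝 |deriv (h μ) s - hd0|)) ?_
              exact eventually_nhdsWithin_of_forall
                (fun u hu => (hlt' u hu.1 hu.2).2)
      have hTinS : T ∈ S := by
        by_contra hTS
        have ht₀T : t₀ < T :=
          lt_of_le_of_ne ht₀Icc.2 (fun hcc => hTS (hcc ▸ ht₀S))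
        have himp := himprove t₀ ht₀Icc ht₀S.2 t₀ ⟨ht₀Icc.1, le_refl _⟩
        have h1lt : ‖g1 t₀‖ < ε₀ :=
          lt_of_le_of_lt (le_trans himp.1 hsmall2) (by linarith)
        have h2lt : |deriv (h μ) t₀ - hd0| < ε₀ :=
          lt_of_le_of_lt (le_trans himp.2.1 hsmall3) (by linarith)
        have hmem1 : {u : ℝ | ‖g1 u‖ < ε₀} ∈ 𝓝 t₀ :=
          ((continuous_norm.continuousAt).comp (hg1c t₀ ht₀Icc.1)).preimage_mem_nhds
            (Iio_mem_nhds h1lt)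
        have hmem2 : {u : ℝ | |deriv (h μ) u - hd0| < ε₀} ∈ 𝓝 t₀ :=
          ((continuous_abs.continuousAt).comp
            ((hhdc t₀ ht₀Icc.1).sub continuousAt_const)).preimage_mem_nhds
            (Iio_mem_nhds h2lt)
        obtain ⟨δ, hδ, hδsub⟩ := Metric.mem_nhds_iff.1 (inter_mem hmem1 hmem2)
        set t₁ : ℝ := min T (t₀ + δ/2) with ht₁def
        have ht₀t₁ : t₀ < t₁ := lt_min ht₀T (by linarith)
        have ht₁S : t₁ ∈ S := by
          refine ⟨⟨le_trans ht₀Icc.1 (le_of_lt ht₀t₁), min_le_left _ _⟩, ?_⟩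
          intro s hs
          rcases le_or_gt s t₀ with hcase | hcase
          · exact ht₀S.2 s ⟨hs.1, hcase⟩
          · have hsball : s ∈ Metric.ball t₀ δ := by
              rw [Metric.mem_ball, Real.dist_eq, abs_of_pos (by linarith)]
              have : s ≤ t₀ + δ/2 := le_trans hs.2 (min_le_right _ _)
              linarith
            have := hδsub hsball
            exact ⟨le_of_lt this.1, le_of_lt this.2⟩
        have := le_csSup hbdd ht₁S
        linarith
      exact hTinS.2
    -- conclude the main estimate
    intro t ht
    have himp := himprove T ⟨le_of_lt hT, le_refl _⟩ hall t ht
    refine ⟨le_trans ?_ himp.1, himp.2.2⟩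
    rw [hg1def, Prod.norm_def]
    exact le_trans (le_of_eq (Real.norm_eq_abs _).symm) (le_max_left _ _)
  -- FINISH : translate into uniform convergence
  constructor
  · rw [Metric.tendstoUniformlyOn_iff]
    intro ε hε
    set μ₁ : ℝ := min μ₀ (ε/(2*(C₂+C₄+1))) with hμ₁def
    have hμ₁pos : 0 < μ₁ := lt_min hμ₀pos (by positivity)
    filter_upwards [Ioc_mem_nhdsGT hμ₁pos] with μ hμmem t htK
    have hb := (main μ hμmem.1 (le_trans hμmem.2 (min_le_left _ _)) t
      (hKT t htK)).2
    have ht0 : 0 ≤ t := hK0 htK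
    have hmax : max 0 (h0 + hd0*t) = h0 + hd0*t :=
      max_eq_right (by nlinarith)
    rw [Real.dist_eq, hmax, abs_sub_comm]
    have hμ2 : μ ≤ ε/(2*(C₂+C₄+1)) := le_trans hμmem.2 (min_le_right _ _)
    have : μ*C₄ ≤ ε/2 := by
      have h1 : μ*C₄ ≤ (ε/(2*(C₂+C₄+1)))*(C₂+C₄+1) := by
        nlinarith [hμmem.1.le]
      calc μ*C₄ ≤ (ε/(2*(C₂+C₄+1)))*(C₂+C₄+1) := h1
        _ = ε/2 := by field_simp
    calc |h μ t - (h0 + hd0*t)| ≤ μ*C₄ := hb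
      _ ≤ ε/2 := this
      _ < ε := by linarith
  · rw [Metric.tendstoUniformlyOn_iff]
    intro ε hε
    set μ₁ : ℝ := min μ₀ (ε/(2*(C₂+C₄+1))) with hμ₁def
    have hμ₁pos : 0 < μ₁ := lt_min hμ₀pos (by positivity)
    filter_upwards [Ioc_mem_nhdsGT hμ₁pos] with μ hμmem t htK
    have hb := (main μ hμmem.1 (le_trans hμmem.2 (min_le_left _ _)) t
      (hKT t htK)).1
    rw [Real.dist_eq]
    have hμ2 : μ ≤ ε/(2*(C₂+C₄+1)) := le_trans hμmem.2 (min_le_right _ _)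
    have : μ*C₂ ≤ ε/2 := by
      have h1 : μ*C₂ ≤ (ε/(2*(C₂+C₄+1)))*(C₂+C₄+1) := by
        nlinarith [hμmem.1.le]
      calc μ*C₂ ≤ (ε/(2*(C₂+C₄+1)))*(C₂+C₄+1) := h1
        _ = ε/2 := by field_simp
    calc |0 - ξ μ t| ≤ μ*C₂ := by rwa [zero_sub, abs_neg]
      _ ≤ ε/2 := this
      _ < ε := by linarith
end
end
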